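/- arXiv:2112.11896 — 10 statements merged into one kernel-verified Lean document; each statement's English description precedes it below -/
import Mathlib

section
/- Let q be an even prime power, let ω be a primitive element of F_{q²}, let α = ω^{q−1} (a primitive (q+1)-st root of unity), and let k be odd with 1 ≤ k ≤ q; write k = q − 2r − 1. Let g_2(X) = ∏_{i=q/2−r}^{q/2+r+1} (X − α^i), a polynomial with coefficients in F_q dividing X^{q+1} − 1. Then the k-dimensional cyclic code ⟨g_2⟩ of length q+1 over F_q is a generalised Reed–Solomon code (and is a [q+1, k, q+2−k]_q MDS code). -/
open Polynomial

lemma finsetProdDvd {K : Type*} [Field K] (s : Finset K) (p : Polynomial K)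
    (h : ∀ x ∈ s, p.eval x = 0) : (∏ x ∈ s, (X - C x)) ∣ p := by
  classical
  induction s using Finset.induction_on generalizing p with
  | empty => simp
  | @insert i s his ih =>
    have hroot : (X - C i) ∣ p := dvd_iff_isRoot.2 (h i (Finset.mem_insert_self i s))
    obtain ⟨p', rfl⟩ := hroot
    rw [Finset.prod_insert his]
    refine mul_dvd_mul_left _ (ih p' fun x hx => ?_)
    have hx' := h x (Finset.mem_insert_of_mem hx)
    simp only [eval_mul, mul_eq_zero, eval_sub, eval_X, eval_C, sub_eq_zero] at hx'
    rcases hx' with rfl | h0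
    · exact absurd hx his
    · exact h0

lemma memRangeAlgebraMap {F K : Type*} [Field F] [Field K] [Fintype F] [Fintype K]
    [Algebra F K] {q : ℕ} (hF : Fintype.card F = q) (x : K) (hx : x ^ q = x) :
    ∃ y : F, algebraMap F K y = x := by
  classical
  by_contra hcon
  push_neg at hcon
  have hinj : Function.Injective (algebraMap F K) := (algebraMap F K).injective
  have hq2 : 2 ≤ q := hF ▸ Fintype.one_lt_card
  set P : Polynomial K := X ^ q - X with hP
  have hPm : P.Monic := by
    refine Polynomial.monic_X_pow_sub ?_
    rw [Polynomial.degree_X]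
    exact_mod_cast by omega
  have hPne : P ≠ 0 := hPm.ne_zero
  have hdeg : P.natDegree ≤ q := le_trans (natDegree_sub_le _ _) (by simp; omega)
  set S : Finset K := insert x (Finset.univ.image (algebraMap F K)) with hS
  have hSsub : S ⊆ P.roots.toFinset := by
    intro z hz
    rw [Multiset.mem_toFinset, mem_roots hPne]
    rcases Finset.mem_insert.1 hz with rfl | hz
    · simp [IsRoot, hP, hx]
    · obtain ⟨y, _, rfl⟩ := Finset.mem_image.1 hz
      have : y ^ q = y := by rw [← hF]; exact FiniteField.pow_card y
      simp [IsRoot, hP, ← map_pow, this]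
  have hcard : S.card = q + 1 := by
    rw [hS, Finset.card_insert_of_notMem, Finset.card_image_of_injective _ hinj,
      Finset.card_univ, hF]
    intro hmem
    obtain ⟨y, _, hy⟩ := Finset.mem_image.1 hmem
    exact hcon y hy
  have := (Finset.card_le_card hSsub).trans ((P.roots.toFinset_card_le).trans
    ((Polynomial.card_roots' P).trans hdeg))
  omega

/-- A generalised Reed–Solomon code of length `q+1` and dimension `k`, with symbols from the
field `F` of `q` elements, viewed inside the `F`-algebra `K` via `algebraMap`. -/
def IsGRSCode (q k : ℕ) (F K : Type*) [Field F] [CommRing K] [Algebra F K]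
    (Code : Set (Fin (q + 1) → K)) : Prop :=
  ∃ (a : Fin q → F) (θ : Fin (q + 1) → F),
    Function.Bijective a ∧ (∀ i, θ i ≠ 0) ∧
    Code = { w | ∃ f : Polynomial F, f.degree ≤ (k - 1 : ℕ) ∧
      w = fun i => algebraMap F K
        (θ i * (Fin.snoc (fun j : Fin q => f.eval (a j)) (f.coeff (k - 1)) : Fin (q + 1) → F) i) }

/-- Let `q` be an even prime power, `ω` a primitive element of `𝔽_{q²}`,
`α = ω^{q−1}` a primitive `(q+1)`-st root of unity, and let `k` be odd with `1 ≤ k ≤ q`;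
write `k = q − 2r − 1`.  Let `g₂(X) = ∏_{i=q/2−r}^{q/2+r+1} (X − α^i)`, a polynomial with
coefficients `c j` in `𝔽_q` dividing `X^{q+1} − 1`.  Then the `k`-dimensional cyclic code
`⟨g₂⟩` of length `q+1` over `𝔽_q` (the span of the `k` cyclic shifts of
`(c₀,…,c_{q+1−k},0,…,0)`) is a generalised Reed–Solomon code, and is a `[q+1,k,q+2−k]_q`
MDS code. -/
theorem grassl_roetteler_cyclic_odd_even_is_GRS
    (q k r : ℕ) (F K : Type*) [Field F] [Fintype F] [Field K] [Fintype K]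
    [DecidableEq F] [Algebra F K]
    (hF : Fintype.card F = q) (hK : Fintype.card K = q ^ 2)
    (hqeven : Even q) (hkodd : Odd k) (hk1 : 1 ≤ k) (hkq : k ≤ q)
    (hkr : (k : ℤ) = q - 2 * r - 1)
    (ω : K) (hω : orderOf ω = q ^ 2 - 1)
    (α : K) (hα : α = ω ^ (q - 1))
    (g₂ : Polynomial K)
    (hg₂ : g₂ = ∏ i ∈ Finset.Icc (q / 2 - r) (q / 2 + r + 1), (X - C (α ^ i)))
    (c : ℕ → F) (hc : ∀ j, algebraMap F K (c j) = g₂.coeff j)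
    (Code : Submodule F (Fin (q + 1) → F))
    (hCode : Code = Submodule.span F
      { v | ∃ t : Fin k, v = fun i : Fin (q + 1) =>
          if (t : ℕ) ≤ (i : ℕ) then c ((i : ℕ) - (t : ℕ)) else 0 }) :
    IsGRSCode q k F F (Code : Set (Fin (q + 1) → F)) ∧
    Module.finrank F Code = k ∧
    (∀ w ∈ Code, w ≠ 0 → q + 2 - k ≤ hammingNorm w) := by
  classical
  have hinj : Function.Injective (algebraMap F K) := (algebraMap F K).injective
  set φ : F →+* K := (algebraMap F K : F →+* K) with hφdef
  have hq2 : 2 ≤ q := hF ▸ Fintype.one_lt_card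
  have hqq2 : 4 ≤ q ^ 2 := by
    calc (4:ℕ) = 2 ^ 2 := rfl
    _ ≤ q ^ 2 := Nat.pow_le_pow_left hq2 2
  obtain ⟨s, hs⟩ := hkodd
  have hqk : q = 2 * s + 2 * r + 2 := by
    have : (q : ℤ) = 2 * s + 2 * r + 2 := by rw [hs] at hkr; push_cast at hkr ⊢; omega
    exact_mod_cast this
  -- characteristic 2
  have hcharF : CharP F 2 := by
    obtain ⟨n, hp, hcard⟩ := FiniteField.card F (ringChar F)
    have h2 : (2 : ℕ) ∣ ringChar F ^ (n : ℕ) := by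
      rw [← hcard, hF]; exact hqeven.two_dvd
    have := (Nat.prime_two.dvd_of_dvd_pow h2)
    have : ringChar F = 2 := ((Nat.prime_dvd_prime_iff_eq Nat.prime_two hp).1 this).symm
    exact this ▸ ringChar.charP F
  have hcharK : CharP K 2 := by
    obtain ⟨n, hp, hcard⟩ := FiniteField.card K (ringChar K)
    have h2 : (2 : ℕ) ∣ ringChar K ^ (n : ℕ) := by
      rw [← hcard, hK, pow_two]; exact Dvd.dvd.mul_right hqeven.two_dvd q
    have := (Nat.prime_two.dvd_of_dvd_pow h2)
    have : ringChar K = 2 := ((Nat.prime_dvd_prime_iff_eq Nat.prime_two hp).1 this).symm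
    exact this ▸ ringChar.charP K
  haveI := hcharK
  haveI := hcharF
  have hneg : ∀ x : K, -x = x := fun x => CharTwo.neg_eq x
  have h2K : (2 : K) = 0 := by exact_mod_cast CharP.cast_eq_zero K 2
  -- frobenius is additive
  have hfrob : ∀ x y : K, (x + y) ^ q = x ^ q + y ^ q := by
    obtain ⟨n, hp, hcard⟩ := FiniteField.card F 2
    have hqpow : q = 2 ^ (n : ℕ) := by rw [← hF, hcard]
    intro x y
    rw [hqpow]
    exact add_pow_char_pow x y 2 (n : ℕ)
  have hKfix : ∀ x : K, x ^ q ^ 2 = x := fun x => hK ▸ FiniteField.pow_card x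
  have hφfix : ∀ y : F, (φ y) ^ q = φ y := fun y => by
    rw [← map_pow, ← hF, FiniteField.pow_card]
  -- order facts
  have hq21 : q ^ 2 - 1 = (q - 1) * (q + 1) := by
    have h1 : 1 ≤ q := by omega
    have h2 : 1 ≤ q ^ 2 := by omega
    zify [h1, h2]
    ring
  have hωne : ω ≠ 0 := by
    intro h
    have h1 := pow_orderOf_eq_one ω
    rw [hω, h, zero_pow (by omega : q ^ 2 - 1 ≠ 0)] at h1
    exact zero_ne_one h1
  have hα1 : α ^ (q + 1) = 1 := by
    rw [hα, ← pow_mul, ← hq21, ← hω]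
    exact pow_orderOf_eq_one ω
  have hαord : orderOf α = q + 1 := by
    rw [orderOf_eq_iff (by omega)]
    refine ⟨hα1, fun m hm hm0 hone => ?_⟩
    rw [hα, ← pow_mul] at hone
    have hdvd : q ^ 2 - 1 ∣ (q - 1) * m := hω ▸ orderOf_dvd_of_pow_eq_one hone
    rw [hq21] at hdvd
    have : q + 1 ∣ m := (Nat.mul_dvd_mul_iff_left (by omega : 0 < q - 1)).1 hdvd
    have := Nat.le_of_dvd hm0 this
    omega
  have hαpow_ne1 : ∀ d : ℕ, 1 ≤ d → d ≤ q → α ^ d ≠ 1 := by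
    intro d h1 h2 h
    have := Nat.le_of_dvd (by omega) (hαord ▸ orderOf_dvd_of_pow_eq_one h)
    omega
  obtain ⟨β, hβdef⟩ : ∃ b : K, b = α ^ q := ⟨_, rfl⟩
  have hαβ : α * β = 1 := by rw [hβdef, ← pow_succ']; exact hα1
  have hαne : α ≠ 0 := by
    intro h; rw [h, zero_mul] at hαβ; exact zero_ne_one hαβ
  have hβne : β ≠ 0 := by
    intro h; rw [h, mul_zero] at hαβ; exact zero_ne_one hαβ
  have hβq : β ^ q = α := by
    rw [hβdef, ← pow_mul]
    have h1 : q * q = (q + 1) * (q - 1) + 1 := by zify [show 1 ≤ q by omega]; ring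
    rw [h1, pow_add, pow_mul, hα1, one_pow, pow_one, one_mul]
  have hαjβ : ∀ j : ℕ, α ^ j * β ^ j = 1 := fun j => by
    rw [← mul_pow, hαβ, one_pow]
  have hβjα : ∀ j : ℕ, j < q → β ^ j + α ≠ 0 := by
    intro j hj h
    have hbj : β ^ j = α := by
      have := eq_neg_of_add_eq_zero_left h
      rwa [hneg] at this
    have : α ^ (j + 1) = 1 := by
      rw [pow_succ]
      calc α ^ j * α = α ^ j * β ^ j := by rw [hbj]
      _ = 1 := hαjβ j
    exact hαpow_ne1 (j + 1) (by omega) (by omega) this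
  have hβpow_ne1 : ∀ d : ℕ, 1 ≤ d → d ≤ q → β ^ d ≠ 1 := by
    intro d h1 h2 h
    rw [hβdef, ← pow_mul] at h
    have hdvd : q + 1 ∣ q * d := hαord ▸ orderOf_dvd_of_pow_eq_one h
    have hcop : Nat.Coprime (q + 1) q := by
      simpa using Nat.coprime_succ_self q
    have := Nat.le_of_dvd (by omega) (hcop.dvd_of_dvd_mul_left hdvd)
    omega
  have hpowinj : ∀ u v : ℕ, u ≤ v → v < q → β ^ u = β ^ v → u = v := by
    intro u v huv hv h
    by_contra hne
    have hd : β ^ (v - u) = 1 := by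
      have h0 : β ^ u * β ^ (v - u) = β ^ u * 1 := by
        rw [mul_one, ← pow_add, Nat.add_sub_cancel' huv, ← h]
      exact mul_left_cancel₀ (pow_ne_zero u hβne) h0
    exact hβpow_ne1 (v - u) (by omega) (by omega) hd
  have hdenq : ∀ j : ℕ, (β ^ j + α) ^ q = α ^ j + β := by
    intro j
    rw [hfrob, ← pow_mul, mul_comm j q, pow_mul, hβq, ← hβdef]
  -- the element δ of trace one
  have hωq : ω ^ q ≠ ω := by
    intro h
    have h1 : ω ^ (q - 1) * ω = ω := by
      rw [← pow_succ]; rwa [Nat.sub_add_cancel (by omega : 1 ≤ q)]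
    have h2 : ω ^ (q - 1) = 1 := by
      field_simp at h1; exact h1
    have hd := orderOf_dvd_of_pow_eq_one h2
    rw [hω] at hd
    have h3 := Nat.le_of_dvd (by omega) hd
    have h2q : 2 * q ≤ q ^ 2 := by rw [pow_two]; exact Nat.mul_le_mul_right q hq2
    omega
  obtain ⟨δ, hδ1, hδfix⟩ : ∃ d : K, d + d ^ q = 1 ∧ (d ^ q) ^ q = d := by
    refine ⟨ω * (ω + ω ^ q)⁻¹, ?_, ?_⟩
    · have hene : ω + ω ^ q ≠ 0 := by
        intro h
        have h' : ω ^ q = -ω := by linear_combination h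
        rw [hneg] at h'
        exact hωq h'
      have heq : (ω + ω ^ q) ^ q = ω + ω ^ q := by
        rw [hfrob, ← pow_mul, ← pow_two, hKfix, add_comm]
      rw [mul_pow, inv_pow, heq, ← add_mul, mul_inv_cancel₀ hene]
    · rw [← pow_mul, ← pow_two q, hKfix]
  -- evaluation points in K
  obtain ⟨A, hAdef⟩ : ∃ A : ℕ → K, A = fun j => (δ * β ^ j + δ ^ q * α) / (β ^ j + α) :=
    ⟨_, rfl⟩
  have hAapp : ∀ j : ℕ, A j = (δ * β ^ j + δ ^ q * α) / (β ^ j + α) := fun j => by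
    rw [hAdef]
  have hAfix : ∀ j : ℕ, j < q → (A j) ^ q = A j := by
    intro j hj
    have hden : β ^ j + α ≠ 0 := hβjα j hj
    have hden2 : α ^ j + β ≠ 0 := by
      rw [← hdenq]; exact pow_ne_zero _ hden
    have hnumq : (δ * β ^ j + δ ^ q * α) ^ q = δ ^ q * α ^ j + δ * β := by
      rw [hfrob, mul_pow, mul_pow, hδfix, ← pow_mul, mul_comm j q, pow_mul, hβq, ← hβdef]
    rw [hAapp, div_pow, hdenq, hnumq, div_eq_div_iff hden2 hden]
    linear_combination (δ ^ q - δ) * hαjβ j + (δ - δ ^ q) * hαβ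
  have hAex : ∀ j : Fin q, ∃ y : F, φ y = A j := fun j =>
    memRangeAlgebraMap hF (A j) (hAfix j j.2)
  choose a ha using hAex
  have hainj : Function.Injective a := by
    intro j j' hjj
    have hA : A (j : ℕ) = A (j' : ℕ) := by rw [← ha j, ← ha j', hjj]
    have hden : β ^ (j:ℕ) + α ≠ 0 := hβjα _ j.2
    have hden' : β ^ (j':ℕ) + α ≠ 0 := hβjα _ j'.2
    rw [hAapp, hAapp, div_eq_div_iff hden hden'] at hA
    have hsub : (δ + δ ^ q) * (α * (β ^ (j:ℕ) - β ^ (j':ℕ))) = 0 := by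
      linear_combination hA + (δ ^ q * α * (β ^ (j:ℕ) - β ^ (j':ℕ))) * h2K
    rw [hδ1, one_mul] at hsub
    have hβeq : β ^ (j:ℕ) = β ^ (j':ℕ) := by
      rcases mul_eq_zero.1 hsub with h | h
      · exact absurd h hαne
      · exact sub_eq_zero.1 h
    refine Fin.ext ?_
    rcases le_total (j:ℕ) (j':ℕ) with h | h
    · exact hpowinj _ _ h j'.2 hβeq
    · exact (hpowinj _ _ h j.2 hβeq.symm).symm
  have habij : Function.Bijective a := by
    rw [Fintype.bijective_iff_injective_and_card]
    exact ⟨hainj, by simp [hF]⟩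
  -- multipliers
  obtain ⟨η, hηdef⟩ : ∃ h : K, h = ω ^ (2 * s) := ⟨_, rfl⟩
  have hηne : η ≠ 0 := by rw [hηdef]; exact pow_ne_zero _ hωne
  have hηq : η ^ q = η * α ^ (2 * s) := by
    have hexp : 2 * s * q = 2 * s + (q - 1) * (2 * s) := by
      zify [show 1 ≤ q by omega]; ring
    rw [hηdef, ← pow_mul, hexp, pow_add, pow_mul ω (q - 1) (2 * s), ← hα]
  obtain ⟨Θ, hΘdef⟩ : ∃ T : ℕ → K, T = fun j => η * α ^ (s * j) * (β ^ j + α) ^ (2 * s) :=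
    ⟨_, rfl⟩
  have hΘapp : ∀ j : ℕ, Θ j = η * α ^ (s * j) * (β ^ j + α) ^ (2 * s) := fun j => by
    rw [hΘdef]
  have hΘfix : ∀ j : ℕ, j < q → (Θ j) ^ q = Θ j := by
    intro j hj
    have hlin : β ^ j + α = α * β ^ j * (α ^ j + β) := by
      linear_combination (-α) * hαjβ j + (-(β ^ j)) * hαβ
    have hpows : (β ^ j) ^ (2 * s) = β ^ (s * j) * β ^ (s * j) := by
      rw [← pow_mul, ← pow_add]
      congr 1
      ring
    have hexp : (Θ j) ^ q = (η * α ^ (2 * s)) * β ^ (s * j) * (α ^ j + β) ^ (2 * s) := by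
      calc (Θ j) ^ q = η ^ q * (α ^ (s * j)) ^ q * ((β ^ j + α) ^ (2 * s)) ^ q := by
            rw [hΘapp, mul_pow, mul_pow]
        _ = (η * α ^ (2 * s)) * (α ^ q) ^ (s * j) * ((β ^ j + α) ^ q) ^ (2 * s) := by
            rw [hηq, pow_right_comm α (s * j) q, pow_right_comm (β ^ j + α) (2 * s) q]
        _ = (η * α ^ (2 * s)) * β ^ (s * j) * (α ^ j + β) ^ (2 * s) := by
            rw [hdenq, ← hβdef]
    rw [hexp, hΘapp, hlin, mul_pow, mul_pow, hpows]
    calc η * α ^ (2 * s) * β ^ (s * j) * (α ^ j + β) ^ (2 * s)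
        = (α ^ (s * j) * β ^ (s * j)) * (η * α ^ (2 * s) * β ^ (s * j) * (α ^ j + β) ^ (2 * s)) := by
          rw [hαjβ (s * j), one_mul]
      _ = η * α ^ (s * j) * (α ^ (2 * s) * (β ^ (s * j) * β ^ (s * j)) * (α ^ j + β) ^ (2 * s)) := by
          ring
  have hΘne : ∀ j : ℕ, j < q → Θ j ≠ 0 := by
    intro j hj
    rw [hΘapp]
    exact mul_ne_zero (mul_ne_zero hηne (pow_ne_zero _ hαne)) (pow_ne_zero _ (hβjα j hj))
  have hΘlastfix : (η * α ^ s) ^ q = η * α ^ s := by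
    rw [mul_pow, hηq, pow_right_comm α s q, ← hβdef]
    linear_combination (η * α ^ s) * hαjβ s
  have hΘlastne : η * α ^ s ≠ 0 := mul_ne_zero hηne (pow_ne_zero _ hαne)
  have hθex : ∀ j : Fin (q + 1), ∃ y : F,
      φ y = (if (j : ℕ) < q then Θ j else η * α ^ s) := by
    intro j
    by_cases h : (j : ℕ) < q
    · rw [if_pos h]; exact memRangeAlgebraMap hF _ (hΘfix j h)
    · rw [if_neg h]; exact memRangeAlgebraMap hF _ hΘlastfix
  choose θ hθ using hθex
  have hθne : ∀ j, θ j ≠ 0 := by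
    intro j h
    have h0 := hθ j
    rw [h, map_zero] at h0
    by_cases hc : (j : ℕ) < q
    · rw [if_pos hc] at h0; exact hΘne j hc h0.symm
    · rw [if_neg hc] at h0; exact hΘlastne h0.symm
  -- the generator polynomial over F
  have hIcc : Finset.Icc (q / 2 - r) (q / 2 + r + 1) = Finset.Icc (s + 1) (s + 2 * r + 2) := by
    have h1 : q / 2 - r = s + 1 := by omega
    have h2 : q / 2 + r + 1 = s + 2 * r + 2 := by omega
    rw [h1, h2]
  have hg₂monic : g₂.Monic := by
    rw [hg₂]
    exact monic_prod_of_monic _ _ (fun i _ => monic_X_sub_C _)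
  have hg₂deg : g₂.natDegree = 2 * r + 2 := by
    rw [hg₂, natDegree_prod_of_monic _ _ (fun i _ => monic_X_sub_C _)]
    simp only [natDegree_X_sub_C]
    rw [Finset.sum_const, smul_eq_mul, mul_one, Nat.card_Icc]
    omega
  have hcφ : ∀ j, φ (c j) = g₂.coeff j := hc
  have hczero : ∀ m : ℕ, 2 * r + 2 < m → c m = 0 := by
    intro m hm
    have h0 : g₂.coeff m = 0 := coeff_eq_zero_of_natDegree_lt (by omega)
    apply hinj
    rw [hcφ, h0, map_zero]
  have hctop : c (2 * r + 2) = 1 := by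
    apply hinj
    rw [hcφ, map_one, ← hg₂deg]
    exact hg₂monic.coeff_natDegree
  obtain ⟨g, hgdef⟩ : ∃ g : Polynomial F,
      g = ∑ j ∈ Finset.range (2 * r + 3), C (c j) * X ^ j := ⟨_, rfl⟩
  have hgcoeff : ∀ m : ℕ, g.coeff m = c m := by
    intro m
    rw [hgdef, finset_sum_coeff]
    by_cases h : m < 2 * r + 3
    · rw [Finset.sum_eq_single m]
      · simp
      · intro j _ hj
        simp [coeff_C_mul, coeff_X_pow, (Ne.symm hj)]
      · intro hnot
        exact absurd (Finset.mem_range.2 h) hnot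
    · rw [Finset.sum_eq_zero, hczero m (by omega)]
      intro j hj
      have : j ≠ m := by
        have := Finset.mem_range.1 hj
        omega
      simp [coeff_C_mul, coeff_X_pow, Ne.symm this]
  have hgmap : g.map φ = g₂ := by
    apply Polynomial.ext
    intro m
    rw [coeff_map, hgcoeff, hcφ]
  have hgnatdeg : g.natDegree = 2 * r + 2 := by
    have := Polynomial.natDegree_map_eq_of_injective hinj g
    rw [hgmap, hg₂deg] at this
    omega
  have hgmonic : g.Monic := by
    rw [Monic, leadingCoeff, hgnatdeg, hgcoeff, hctop]
  -- membership criterion : if the K-polynomial of a word is divisible by g₂ then the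
  -- word lies in the cyclic code
  have hmem : ∀ w : Fin (q + 1) → F,
      g₂ ∣ (∑ j : Fin (q + 1), C (φ (w j)) * X ^ (j : ℕ)) → w ∈ Code := by
    intro w hdvd
    obtain ⟨vp, hvpdef⟩ : ∃ vp : Polynomial F,
        vp = ∑ j : Fin (q + 1), C (w j) * X ^ (j : ℕ) := ⟨_, rfl⟩
    have hvpcoeff : ∀ m : Fin (q + 1), vp.coeff (m : ℕ) = w m := by
      intro m
      rw [hvpdef, finset_sum_coeff]
      rw [Finset.sum_eq_single m]
      · simp
      · intro j _ hj
        have : (m : ℕ) ≠ (j : ℕ) := fun hh => hj (Fin.ext hh).symm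
        simp [coeff_C_mul, coeff_X_pow, this]
      · intro hnot
        exact absurd (Finset.mem_univ m) hnot
    have hvpmap : vp.map φ = ∑ j : Fin (q + 1), C (φ (w j)) * X ^ (j : ℕ) := by
      rw [hvpdef, Polynomial.map_sum]
      congr 1
      funext j
      rw [Polynomial.map_mul, Polynomial.map_pow, map_C, map_X]
    have hgdvd : g ∣ vp := by
      rw [← map_dvd_map φ hinj hgmonic, hgmap, hvpmap]
      exact hdvd
    obtain ⟨u, hu⟩ := hgdvd
    by_cases hu0 : u = 0
    · have : w = 0 := by
        funext i
        rw [← hvpcoeff i, hu, hu0, mul_zero, coeff_zero]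
        rfl
      rw [this]
      exact Code.zero_mem
    · have hvpdeg : vp.natDegree ≤ q := by
        rw [hvpdef]
        refine natDegree_sum_le_of_forall_le _ _ (fun j _ => ?_)
        refine le_trans (natDegree_mul_le) ?_
        simp only [natDegree_C, natDegree_pow, natDegree_X, zero_add, mul_one]
        omega
      have hvpne : vp ≠ 0 := by
        rw [hu]
        exact mul_ne_zero hgmonic.ne_zero hu0
      have hudeg : u.natDegree < k := by
        have hmul : vp.natDegree = g.natDegree + u.natDegree := by
          rw [hu]
          exact natDegree_mul hgmonic.ne_zero hu0
        rw [hgnatdeg] at hmul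
        omega
      have hwsum : w = ∑ t ∈ Finset.range k, u.coeff t •
          (fun i : Fin (q + 1) => if t ≤ (i : ℕ) then c ((i : ℕ) - t) else 0) := by
        funext i
        have hcoeff : w i = (g * u).coeff (i : ℕ) := by rw [← hvpcoeff i, hu]
        conv_lhs => rw [hcoeff]
        conv_lhs => rw [Polynomial.as_sum_range' u k hudeg]
        rw [Finset.mul_sum, finset_sum_coeff, Finset.sum_apply]
        refine Finset.sum_congr rfl (fun t _ => ?_)
        rw [← Polynomial.C_mul_X_pow_eq_monomial, ← mul_assoc, Polynomial.coeff_mul_X_pow',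
          Polynomial.coeff_mul_C, Pi.smul_apply, smul_eq_mul]
        by_cases hti : t ≤ (i : ℕ)
        · rw [if_pos hti, if_pos hti, hgcoeff, mul_comm]
        · rw [if_neg hti, if_neg hti, mul_zero]
      rw [hCode, hwsum]
      refine Submodule.sum_mem _ (fun t ht => ?_)
      refine Submodule.smul_mem _ _ (Submodule.subset_span ?_)
      exact ⟨⟨t, Finset.mem_range.1 ht⟩, rfl⟩
  -- geometric sums
  have hgeom : ∀ d : ℕ, 1 ≤ d → d ≤ q → ∑ j ∈ Finset.range (q + 1), (α ^ d) ^ j = 0 := by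
    intro d h1 h2
    have hne1 : α ^ d ≠ 1 := hαpow_ne1 d h1 h2
    have hpow : (α ^ d) ^ (q + 1) = 1 := by
      rw [← pow_mul, mul_comm, pow_mul, hα1, one_pow]
    have hgs := geom_sum_mul (α ^ d) (q + 1)
    rw [hpow, sub_self] at hgs
    rcases mul_eq_zero.1 hgs with h | h
    · exact h
    · exact absurd (sub_eq_zero.1 h) hne1
  have hpowinjα : ∀ u v : ℕ, u ≤ v → v ≤ q → α ^ u = α ^ v → u = v := by
    intro u v huv hv h
    by_contra hne
    have hd : α ^ (v - u) = 1 := by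
      have h0 : α ^ u * α ^ (v - u) = α ^ u * 1 := by
        rw [mul_one, ← pow_add, Nat.add_sub_cancel' huv, ← h]
      exact mul_left_cancel₀ (pow_ne_zero u hαne) h0
    exact hαpow_ne1 (v - u) (by omega) (by omega) hd
  -- the GRS evaluation word
  obtain ⟨E0, hE0def⟩ : ∃ E0 : Polynomial F → Fin (q + 1) → F,
      E0 = fun f i => θ i *
        (Fin.snoc (fun j : Fin q => f.eval (a j)) (f.coeff (k - 1)) : Fin (q + 1) → F) i :=
    ⟨_, rfl⟩
  have hE0app : ∀ (f : Polynomial F) (i : Fin (q + 1)), E0 f i =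
      θ i * (if hlt : (i : ℕ) < q then f.eval (a ⟨(i : ℕ), hlt⟩) else f.coeff (k - 1)) := by
    intro f i
    rw [hE0def]
    induction i using Fin.lastCases with
    | last =>
      simp only [Fin.snoc_last, Fin.val_last]
      rw [dif_neg (lt_irrefl q)]
    | cast j =>
      simp only [Fin.snoc_castSucc, Fin.coe_castSucc]
      rw [dif_pos j.2]
  -- the workhorse : the K-polynomial attached to an evaluation word vanishes on the
  -- roots of g₂
  have hwφ : ∀ f : Polynomial F, f.natDegree < k → ∃ Q : Polynomial K, Q.natDegree < k ∧
      (∀ i : Fin (q + 1), φ (E0 f i) = η * α ^ (s * (i : ℕ)) * Q.eval (β ^ (i : ℕ))) := by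
    intro f hf
    obtain ⟨fh, hfhdef⟩ : ∃ fh : Polynomial K, fh = f.map φ := ⟨_, rfl⟩
    have hfhdeg : fh.natDegree < k := by
      rw [hfhdef]
      exact lt_of_le_of_lt natDegree_map_le hf
    obtain ⟨Q, hQdef⟩ : ∃ Q : Polynomial K, Q = ∑ t ∈ Finset.range k,
        C (fh.coeff t) * (C δ * X + C (δ ^ q * α)) ^ t * (X + C α) ^ (2 * s - t) := ⟨_, rfl⟩
    have hQdeg : Q.natDegree < k := by
      rw [hQdef]
      refine lt_of_le_of_lt (natDegree_sum_le_of_forall_le _ _ (fun t ht => ?_)) (by omega : 2 * s < k)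
      have ht' : t ≤ 2 * s := by have := Finset.mem_range.1 ht; omega
      refine le_trans natDegree_mul_le ?_
      have h1 : (C (fh.coeff t) * (C δ * X + C (δ ^ q * α)) ^ t).natDegree ≤ t := by
        refine le_trans natDegree_mul_le ?_
        rw [natDegree_C, zero_add]
        refine le_trans (natDegree_pow_le) ?_
        have : (C δ * X + C (δ ^ q * α)).natDegree ≤ 1 := by
          refine le_trans (natDegree_add_le _ _) (max_le ?_ ?_)
          · exact le_trans (natDegree_C_mul_le _ _) (by simp)
          · rw [natDegree_C]; omega
        calc t * (C δ * X + C (δ ^ q * α)).natDegree ≤ t * 1 := Nat.mul_le_mul_left t this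
          _ = t := mul_one t
      have h2 : ((X + C α) ^ (2 * s - t) : Polynomial K).natDegree ≤ 2 * s - t := by
        refine le_trans (natDegree_pow_le) ?_
        have : ((X + C α) : Polynomial K).natDegree ≤ 1 := by
          refine le_trans (natDegree_add_le _ _) ?_
          simp
        calc (2 * s - t) * (X + C α).natDegree ≤ (2 * s - t) * 1 :=
              Nat.mul_le_mul_left _ this
          _ = 2 * s - t := mul_one _
      omega
    have hQeval : ∀ j : ℕ, j < q → Q.eval (β ^ j) = (β ^ j + α) ^ (2 * s) * fh.eval (A j) := by
      intro j hj
      have hden : β ^ j + α ≠ 0 := hβjα j hj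
      rw [hQdef, eval_finset_sum, eval_eq_sum_range' hfhdeg (A j), Finset.mul_sum]
      refine Finset.sum_congr rfl (fun t ht => ?_)
      have ht' : t ≤ 2 * s := by have := Finset.mem_range.1 ht; omega
      simp only [eval_mul, eval_pow, eval_add, eval_C, eval_X]
      have hAt : (A j) ^ t * (β ^ j + α) ^ t = (δ * β ^ j + δ ^ q * α) ^ t := by
        rw [← mul_pow, hAapp, div_mul_cancel₀ _ hden]
      have hsplit : (β ^ j + α) ^ (2 * s) = (β ^ j + α) ^ (2 * s - t) * (β ^ j + α) ^ t := by
        rw [← pow_add, Nat.sub_add_cancel ht']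
      rw [hsplit, ← hAt]
      ring
    have hQα : Q.eval α = fh.coeff (2 * s) * α ^ (2 * s) := by
      rw [hQdef, eval_finset_sum, Finset.sum_eq_single (2 * s)]
      · simp only [eval_mul, eval_pow, eval_add, eval_C, eval_X]
        rw [Nat.sub_self, pow_zero, mul_one]
        have hsum : δ * α + δ ^ q * α = α := by rw [← add_mul, hδ1, one_mul]
        rw [hsum]
      · intro t ht hne
        have ht' : t < k := Finset.mem_range.1 ht
        have h2st : 2 * s - t ≠ 0 := by omega
        simp only [eval_mul, eval_pow, eval_add, eval_C, eval_X]
        have hzero : α + α = (0 : K) := CharTwo.add_self_eq_zero α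
        rw [hzero, zero_pow h2st, mul_zero]
      · intro hnot
        exact absurd (Finset.mem_range.2 (by omega : 2 * s < k)) hnot
    refine ⟨Q, hQdeg, fun i => ?_⟩
    rw [hE0app, map_mul]
    by_cases hlt : (i : ℕ) < q
    · rw [dif_pos hlt]
      have hθi : φ (θ i) = Θ (i : ℕ) := by rw [hθ i, if_pos hlt]
      have heval : φ (f.eval (a ⟨(i : ℕ), hlt⟩)) = fh.eval (A (i : ℕ)) := by
        rw [hfhdef, ← ha ⟨(i : ℕ), hlt⟩, eval_map, eval₂_hom]
      rw [hθi, heval, hQeval _ hlt, hΘapp]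
      ring
    · have hiq : (i : ℕ) = q := by have := i.2; omega
      rw [dif_neg hlt]
      have hθi : φ (θ i) = η * α ^ s := by rw [hθ i, if_neg hlt]
      have hcoeff : φ (f.coeff (k - 1)) = fh.coeff (2 * s) := by
        rw [hfhdef, coeff_map, show k - 1 = 2 * s from by omega]
      rw [hθi, hcoeff, hiq, hβq, hQα]
      have hαs : α ^ (s * q) * α ^ (2 * s) = α ^ s := by
        rw [← pow_add]
        have hex : s * q + 2 * s = (q + 1) * s + s := by ring
        rw [hex, pow_add, pow_mul, hα1, one_pow, one_mul]
      linear_combination (-(η * fh.coeff (2 * s))) * hαs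
  -- vanishing of the word polynomial at the roots of g₂, hence membership in Code
  have hE0mem : ∀ f : Polynomial F, f.natDegree < k → E0 f ∈ Code := by
    intro f hf
    obtain ⟨Q, hQdeg, hQw⟩ := hwφ f hf
    apply hmem
    have hroots : ∀ i0 ∈ Finset.Icc (s + 1) (s + 2 * r + 2),
        eval (α ^ i0) (∑ j : Fin (q + 1), C (φ (E0 f j)) * X ^ (j : ℕ)) = 0 := by
      intro i0 hi0
      obtain ⟨hlo, hhi⟩ := Finset.mem_Icc.1 hi0
      rw [eval_finset_sum]
      simp only [eval_mul, eval_C, eval_pow, eval_X]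
      have hstep : ∀ j : Fin (q + 1), φ (E0 f j) * (α ^ i0) ^ (j : ℕ) =
          η * α ^ (s * (j : ℕ)) * Q.eval (β ^ (j : ℕ)) * (α ^ i0) ^ (j : ℕ) := by
        intro j
        rw [hQw j]
      rw [Finset.sum_congr rfl (fun j _ => hstep j)]
      rw [Fin.sum_univ_eq_sum_range (fun j => η * α ^ (s * j) * Q.eval (β ^ j) * (α ^ i0) ^ j)]
      have hcol : ∀ t : ℕ, t < k → α ^ s * α ^ i0 * β ^ t = α ^ (i0 + s - t) := by
        intro t ht
        rw [← pow_add]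
        have hex : s + i0 = (i0 + s - t) + t := by omega
        rw [hex, pow_add, mul_assoc, hαjβ t, mul_one]
      have hexpand : ∀ j : ℕ, η * α ^ (s * j) * Q.eval (β ^ j) * (α ^ i0) ^ j =
          ∑ t ∈ Finset.range k, (η * Q.coeff t) * (α ^ (i0 + s - t)) ^ j := by
        intro j
        rw [eval_eq_sum_range' hQdeg (β ^ j), Finset.mul_sum, Finset.sum_mul]
        refine Finset.sum_congr rfl (fun t ht => ?_)
        rw [← hcol t (Finset.mem_range.1 ht)]
        ring
      rw [Finset.sum_congr rfl (fun j _ => hexpand j), Finset.sum_comm]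
      refine Finset.sum_eq_zero (fun t ht => ?_)
      have ht' : t < k := Finset.mem_range.1 ht
      rw [← Finset.mul_sum, hgeom (i0 + s - t) (by omega) (by omega), mul_zero]
    have hinjon : ∀ u ∈ Finset.Icc (s + 1) (s + 2 * r + 2),
        ∀ v ∈ Finset.Icc (s + 1) (s + 2 * r + 2), α ^ u = α ^ v → u = v := by
      intro u hu v hv h
      obtain ⟨hu1, hu2⟩ := Finset.mem_Icc.1 hu
      obtain ⟨hv1, hv2⟩ := Finset.mem_Icc.1 hv
      rcases le_total u v with hle | hle
      · exact hpowinjα u v hle (by omega) h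
      · exact (hpowinjα v u hle (by omega) h.symm).symm
    have hprodim : g₂ = ∏ x ∈ (Finset.Icc (s + 1) (s + 2 * r + 2)).image (fun i => α ^ i),
        (X - C x) := by
      rw [hg₂, hIcc, Finset.prod_image hinjon]
    rw [hprodim]
    refine finsetProdDvd _ _ (fun x hx => ?_)
    obtain ⟨i0, hi0, rfl⟩ := Finset.mem_image.1 hx
    exact hroots i0 hi0
  -- the evaluation map as a linear map
  have hE0add : ∀ f h : Polynomial F, E0 (f + h) = E0 f + E0 h := by
    intro f h
    funext i
    rw [Pi.add_apply, hE0app, hE0app, hE0app]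
    by_cases hlt : (i : ℕ) < q
    · rw [dif_pos hlt, dif_pos hlt, dif_pos hlt, eval_add, mul_add]
    · rw [dif_neg hlt, dif_neg hlt, dif_neg hlt, coeff_add, mul_add]
  have hE0smul : ∀ (m : F) (f : Polynomial F), E0 (m • f) = m • E0 f := by
    intro m f
    funext i
    rw [Pi.smul_apply, hE0app, hE0app, smul_eq_mul]
    by_cases hlt : (i : ℕ) < q
    · rw [dif_pos hlt, dif_pos hlt, smul_eq_C_mul, eval_mul, eval_C]
      ring
    · rw [dif_neg hlt, dif_neg hlt, coeff_smul, smul_eq_mul]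
      ring
  obtain ⟨E, hEdef⟩ : ∃ E : Polynomial F →ₗ[F] (Fin (q + 1) → F),
      ∀ f, E f = E0 f := ⟨⟨⟨E0, fun f h => hE0add f h⟩, fun m f => hE0smul m f⟩, fun f => rfl⟩
  obtain ⟨E', hE'def⟩ : ∃ E' : (degreeLT F k) →ₗ[F] (Fin (q + 1) → F),
      ∀ m : degreeLT F k, E' m = E0 m.1 :=
    ⟨E.comp (Submodule.subtype _), fun m => by simp [hEdef]⟩
  have hnatlt : ∀ f : Polynomial F, f ∈ degreeLT F k → f.natDegree < k := by
    intro f hf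
    rw [mem_degreeLT] at hf
    by_cases h0 : f = 0
    · rw [h0, natDegree_zero]; omega
    · exact (natDegree_lt_iff_degree_lt h0).2 hf
  have hrange_le : LinearMap.range E' ≤ Code := by
    rintro w ⟨⟨f, hf⟩, rfl⟩
    rw [hE'def]
    exact hE0mem f (hnatlt f hf)
  -- injectivity of evaluation
  have hrootsub : ∀ f : Polynomial F, f ≠ 0 → f.natDegree < q →
      (∀ j : Fin q, f.eval (a j) = 0) → False := by
    intro f hf0 hdeg hz
    have hsub : Finset.univ.image a ⊆ f.roots.toFinset := by
      intro x hx
      obtain ⟨j, _, rfl⟩ := Finset.mem_image.1 hx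
      rw [Multiset.mem_toFinset, mem_roots hf0]
      exact hz j
    have hcard : q ≤ f.roots.toFinset.card := by
      have := Finset.card_le_card hsub
      rwa [Finset.card_image_of_injective _ hainj, Finset.card_univ, Fintype.card_fin] at this
    have := (f.roots.toFinset_card_le).trans (Polynomial.card_roots' f)
    omega
  have hEval0 : ∀ (f : Polynomial F) (j : Fin q), E0 f (Fin.castSucc j) = θ (Fin.castSucc j) * f.eval (a j) := by
    intro f j
    rw [hE0app]
    have hlt : ((Fin.castSucc j : Fin (q + 1)) : ℕ) < q := by
      simp [Fin.coe_castSucc, j.2]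
    rw [dif_pos hlt]
    have heq : (⟨((Fin.castSucc j : Fin (q + 1)) : ℕ), hlt⟩ : Fin q) = j := Fin.ext (by simp)
    rw [heq]
  have hE'inj : Function.Injective E' := by
    rw [← LinearMap.ker_eq_bot, LinearMap.ker_eq_bot']
    rintro ⟨f, hf⟩ hm
    have hzero : E0 f = 0 := by rw [← hE'def ⟨f, hf⟩, hm]
    have hfz : ∀ j : Fin q, f.eval (a j) = 0 := by
      intro j
      have h0 : E0 f (Fin.castSucc j) = 0 := by rw [hzero]; rfl
      rw [hEval0] at h0
      rcases mul_eq_zero.1 h0 with h | h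
      · exact absurd h (hθne _)
      · exact h
    have hf0 : f = 0 := by
      by_contra hne
      exact hrootsub f hne (by have := hnatlt f hf; omega) hfz
    exact Subtype.ext hf0
  haveI : Module.Finite F (degreeLT F k) :=
    Module.Finite.equiv (degreeLTEquiv F k).symm
  have hfrE' : Module.finrank F (LinearMap.range E') = k := by
    rw [LinearMap.finrank_range_of_inj hE'inj, (degreeLTEquiv F k).finrank_eq,
      Module.finrank_fin_fun]
  have hsetr : { v : Fin (q + 1) → F | ∃ t : Fin k, v = fun i : Fin (q + 1) =>
      if (t : ℕ) ≤ (i : ℕ) then c ((i : ℕ) - (t : ℕ)) else 0 } =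
      Set.range (fun (t : Fin k) (i : Fin (q + 1)) =>
        if (t : ℕ) ≤ (i : ℕ) then c ((i : ℕ) - (t : ℕ)) else 0) := by
    ext v
    exact ⟨fun ⟨t, h⟩ => ⟨t, h.symm⟩, fun ⟨t, h⟩ => ⟨t, h.symm⟩⟩
  have hfrCode : Module.finrank F Code ≤ k := by
    rw [hCode, hsetr]
    refine le_trans (finrank_span_le_card _) ?_
    rw [Set.toFinset_range]
    exact le_trans Finset.card_image_le (by simp)
  have hCodeEq : LinearMap.range E' = Code := by
    refine Submodule.eq_of_le_of_finrank_le hrange_le ?_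
    rw [hfrE']
    exact hfrCode
  have hdeg_iff : ∀ f : Polynomial F, f.degree < (k : ℕ) ↔ f.degree ≤ ((k - 1 : ℕ) : WithBot ℕ) := by
    intro f
    constructor
    · intro h
      by_cases h0 : f = 0
      · rw [h0, degree_zero]; exact bot_le
      · rw [degree_eq_natDegree h0] at h ⊢
        have : f.natDegree < k := by exact_mod_cast h
        exact_mod_cast by omega
    · intro h
      refine lt_of_le_of_lt h ?_
      exact_mod_cast by omega
  -- conclusions
  refine ⟨?_, ?_, ?_⟩
  · -- the code is a GRS code
    refine ⟨a, θ, habij, hθne, ?_⟩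
    ext w
    simp only [Set.mem_setOf_eq, SetLike.mem_coe]
    constructor
    · intro hw
      rw [← hCodeEq] at hw
      obtain ⟨⟨f, hf⟩, hfw⟩ := hw
      refine ⟨f, (hdeg_iff f).1 (mem_degreeLT.1 hf), ?_⟩
      rw [← hfw, hE'def, hE0def]
      funext i
      rw [Algebra.algebraMap_self, RingHom.id_apply]
    · rintro ⟨f, hdf, rfl⟩
      have hf : (fun i : Fin (q + 1) => algebraMap F F (θ i *
          (Fin.snoc (fun j : Fin q => f.eval (a j)) (f.coeff (k - 1)) : Fin (q + 1) → F) i))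
          = E0 f := by
        rw [hE0def]
        funext i
        rw [Algebra.algebraMap_self, RingHom.id_apply]
      rw [hf]
      exact hE0mem f (hnatlt f (mem_degreeLT.2 ((hdeg_iff f).2 hdf)))
  · rw [← hCodeEq, hfrE']
  · -- minimum distance
    intro w hw hwne
    rw [← hCodeEq] at hw
    obtain ⟨m, hm⟩ := hw
    have hwE : w = E0 m.1 := by rw [← hm, hE'def]
    obtain ⟨f, hf⟩ := m
    simp only at hwE
    have hnatdeg : f.natDegree < k := hnatlt f hf
    have hfne : f ≠ 0 := by
      intro h0
      apply hwne
      rw [hwE, h0]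
      funext i
      rw [hE0app]
      by_cases hlt : (i : ℕ) < q
      · rw [dif_pos hlt, eval_zero, mul_zero]; rfl
      · rw [dif_neg hlt, coeff_zero, mul_zero]; rfl
    have hrootmem : ∀ (i : Fin (q + 1)) (h : (i : ℕ) < q), w i = 0 →
        a ⟨(i : ℕ), h⟩ ∈ f.roots.toFinset := by
      intro i h hw0
      rw [hwE, hE0app, dif_pos h] at hw0
      rcases mul_eq_zero.1 hw0 with h' | h'
      · exact absurd h' (hθne _)
      · rw [Multiset.mem_toFinset, mem_roots hfne]
        exact h'
    have hRcard : f.roots.toFinset.card ≤ f.natDegree :=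
      (f.roots.toFinset_card_le).trans (Polynomial.card_roots' f)
    obtain ⟨gsel, hgsel⟩ : ∃ g : Fin (q + 1) → F,
        ∀ i : Fin (q + 1), ∀ h : (i : ℕ) < q, g i = a ⟨(i : ℕ), h⟩ :=
      ⟨fun i => if h : (i : ℕ) < q then a ⟨(i : ℕ), h⟩ else 0,
        fun i h => dif_pos h⟩
    set Z : Finset (Fin (q + 1)) := Finset.univ.filter (fun i => w i = 0) with hZdef
    have hZcard : Z.card ≤ k - 1 := by
      by_cases hck : f.coeff (k - 1) = 0
      · -- low degree case
        have hk2 : 2 ≤ k := by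
          by_contra hcon
          have hk1' : k = 1 := by omega
          have hnd0 : f.natDegree = 0 := by omega
          have := Polynomial.eq_C_of_natDegree_eq_zero hnd0
          rw [show (0 : ℕ) = k - 1 from by omega, hck, map_zero] at this
          exact hfne this
        have hnd : f.natDegree ≤ k - 2 := by
          by_contra hcon
          push_neg at hcon
          have h1 : f.natDegree = k - 1 := by omega
          have h2 : f.leadingCoeff = 0 := by rw [leadingCoeff, h1, hck]
          exact hfne (leadingCoeff_eq_zero.1 h2)
        have hsplit := Finset.card_filter_add_card_filter_not
          (s := Z) (p := fun i : Fin (q + 1) => (i : ℕ) < q)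
        have hZ' : (Z.filter (fun i : Fin (q + 1) => (i : ℕ) < q)).card ≤ k - 2 := by
          refine le_trans (Finset.card_le_card_of_injOn gsel ?_ ?_) (le_trans hRcard hnd)
          · intro i hi
            obtain ⟨hiZ, hilt⟩ := Finset.mem_filter.1 hi
            rw [hgsel i hilt]
            exact hrootmem i hilt ((Finset.mem_filter.1 hiZ).2)
          · intro i hi i' hi' hii
            obtain ⟨_, hilt⟩ := Finset.mem_filter.1 (Finset.mem_coe.1 hi)
            obtain ⟨_, hilt'⟩ := Finset.mem_filter.1 (Finset.mem_coe.1 hi')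
            rw [hgsel i hilt, hgsel i' hilt'] at hii
            have := hainj hii
            have hval : (i : ℕ) = (i' : ℕ) := by simpa using this
            exact Fin.ext hval
        have hZrest : (Z.filter (fun i : Fin (q + 1) => ¬ (i : ℕ) < q)).card ≤ 1 := by
          refine le_trans (Finset.card_le_card (t := {Fin.last q}) ?_) (by simp)
          intro i hi
          obtain ⟨_, hge⟩ := Finset.mem_filter.1 hi
          have : (i : ℕ) = q := by have := i.2; omega
          rw [Finset.mem_singleton]
          exact Fin.ext (by simpa using this)
        omega
      · -- full degree case : the last coordinate is nonzero
        have hall : ∀ i ∈ Z, (i : ℕ) < q := by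
          intro i hi
          by_contra hcon
          have hiz := (Finset.mem_filter.1 hi).2
          rw [hwE, hE0app, dif_neg hcon] at hiz
          rcases mul_eq_zero.1 hiz with h' | h'
          · exact hθne _ h'
          · exact hck h'
        refine le_trans (Finset.card_le_card_of_injOn gsel ?_ ?_) (le_trans hRcard (by omega))
        · intro i hi
          have hilt := hall i hi
          rw [hgsel i hilt]
          exact hrootmem i hilt ((Finset.mem_filter.1 hi).2)
        · intro i hi i' hi' hii
          have hilt := hall i (Finset.mem_coe.1 hi)
          have hilt' := hall i' (Finset.mem_coe.1 hi')
          rw [hgsel i hilt, hgsel i' hilt'] at hii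
          have := hainj hii
          have hval : (i : ℕ) = (i' : ℕ) := by simpa using this
          exact Fin.ext hval
    have htot : Z.card + (Finset.univ.filter (fun i : Fin (q + 1) => ¬ w i = 0)).card
        = q + 1 := by
      rw [hZdef]
      have h0 := Finset.card_filter_add_card_filter_not
        (s := (Finset.univ : Finset (Fin (q + 1)))) (p := fun i => w i = 0)
      rwa [Finset.card_univ, Fintype.card_fin] at h0
    have hham : hammingNorm w = (Finset.univ.filter (fun i => ¬ w i = 0)).card := by
      simp only [hammingNorm, ne_eq]
    rw [hham]
    omega
end

section
/- Let q be an odd prime power, let ω be a primitive element of F_{q²}, let α = ω^{q−1} (a primitive (q+1)-st root of unity), and let r be a positive integer with 2r ≤ q + 1. Then the polynomial g_3(X) = ∏_{i=−r+1}^{r} (X − ω α^i) ∈ F_{q²}[X] has all of its coefficients in the subfield F_q, and g_3(X) divides X^{q+1} − ω^{q+1} (note ω^{q+1} ∈ F_q and ω^{q+1} ≠ 1). -/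
open Polynomial

/-- Auxiliary: in a finite field extension `F ⊆ K` with `|F| = q`, an element of `K`
fixed by `x ↦ x^q` lies in the image of `F`. -/
lemma aux_mem_range_of_pow_eq {F K : Type*} [Field F] [Fintype F] [Field K] [Fintype K]
    [Algebra F K] {q : ℕ} (hF : Fintype.card F = q) {x : K} (hx : x ^ q = x) :
    x ∈ Set.range (algebraMap F K) := by
  classical
  have h1 : 1 < q := hF ▸ Fintype.one_lt_card
  set P : K[X] := X ^ q - X with hP
  have hP0 : P ≠ 0 := FiniteField.X_pow_card_sub_X_ne_zero K h1
  have hdeg : P.natDegree = q := FiniteField.X_pow_card_sub_X_natDegree_eq K h1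
  have hinj : Function.Injective (algebraMap F K) := (algebraMap F K).injective
  set s : Finset K := Finset.univ.image (algebraMap F K) with hs
  have hcards : s.card = q := by
    rw [hs, Finset.card_image_of_injective _ hinj, Finset.card_univ, hF]
  have hsub : s.val ⊆ P.roots := by
    intro y hy
    rw [Finset.mem_val, hs, Finset.mem_image] at hy
    obtain ⟨z, -, rfl⟩ := hy
    rw [Polynomial.mem_roots hP0]
    have hz : z ^ q = z := by rw [← hF]; exact FiniteField.pow_card z
    simp only [hP, IsRoot, eval_sub, eval_pow, eval_X, ← map_pow, hz, sub_self]
  have hle : s.val ≤ P.roots := (Multiset.le_iff_subset s.nodup).mpr hsub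
  have hcardle : Multiset.card P.roots ≤ Multiset.card s.val := by
    rw [Finset.card] at hcards
    rw [hcards]
    exact hdeg ▸ P.card_roots'
  have heq : s.val = P.roots := Multiset.eq_of_le_of_card_le hle hcardle
  have hxr : x ∈ P.roots := by
    rw [Polynomial.mem_roots hP0]
    simp only [hP, IsRoot, eval_sub, eval_pow, eval_X, hx, sub_self]
  rw [← heq, Finset.mem_val, hs, Finset.mem_image] at hxr
  obtain ⟨z, -, rfl⟩ := hxr
  exact ⟨z, rfl⟩

/-- Let `q` be an odd prime power, `F = 𝔽_q ⊆ K = 𝔽_{q²}`, let `ω` be a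
primitive element of `K`, let `α = ω^{q−1}` (a primitive `(q+1)`-st root of unity), and let
`r` be a positive integer with `2r ≤ q + 1`.  Then the polynomial
`g₃(X) = ∏_{i=−r+1}^{r} (X − ω α^i) ∈ K[X]` has all of its coefficients in the subfield `F`,
and `g₃` divides `X^{q+1} − ω^{q+1}` (note `ω^{q+1} ∈ F` and `ω^{q+1} ≠ 1`). -/
theorem grassl_roetteler_g3_coeffs_and_dvd
    (q r : ℕ) (F K : Type*) [Field F] [Fintype F] [Field K] [Fintype K] [Algebra F K]
    (hF : Fintype.card F = q) (hK : Fintype.card K = q ^ 2)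
    (hqodd : Odd q) (hr1 : 1 ≤ r) (hr : 2 * r ≤ q + 1)
    (ω : K) (hω : orderOf ω = q ^ 2 - 1)
    (α : K) (hα : α = ω ^ (q - 1))
    (g₃ : Polynomial K)
    (hg₃ : g₃ = ∏ i ∈ Finset.Icc (-(r : ℤ) + 1) (r : ℤ), (X - C (ω * α ^ i))) :
    (∀ j, g₃.coeff j ∈ Set.range (algebraMap F K)) ∧
    g₃ ∣ (X ^ (q + 1) - C (ω ^ (q + 1))) ∧
    ω ^ (q + 1) ∈ Set.range (algebraMap F K) ∧ ω ^ (q + 1) ≠ 1 := by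
  classical
  have hq2 : 2 ≤ q := hF ▸ Fintype.one_lt_card
  have hq3 : 3 ≤ q := by obtain ⟨m, hm⟩ := hqodd; omega
  have hqsq : q ^ 2 = q * q := sq q
  have e1 : q ^ 2 - 1 = (q - 1) * (q + 1) := by
    obtain ⟨k, rfl⟩ : ∃ k, q = k + 1 := ⟨q - 1, by omega⟩
    have h : (k + 1) ^ 2 = k * (k + 1 + 1) + 1 := by ring
    simp only [Nat.add_sub_cancel]
    omega
  have hω1 : ω ^ (q ^ 2 - 1) = 1 := by rw [← hω]; exact pow_orderOf_eq_one ω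
  have hω0 : ω ≠ 0 := by
    intro h
    have h9 : 3 ^ 2 ≤ q ^ 2 := Nat.pow_le_pow_left hq3 2
    rw [h, zero_pow (by omega : q ^ 2 - 1 ≠ 0)] at hω1
    exact zero_ne_one hω1
  set U : Kˣ := Units.mk0 ω hω0 with hUdef
  have hU : (U : K) = ω := rfl
  have horderU : orderOf U = q ^ 2 - 1 := by rw [← orderOf_units, hU, hω]
  set A : Kˣ := U ^ (q - 1) with hAdef
  have hAval : (A : K) = α := by rw [hα, hAdef, Units.val_pow_eq_pow_val, hU]
  have horderA : orderOf A = q + 1 := by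
    rw [hAdef, orderOf_pow U, horderU, e1,
      Nat.gcd_eq_right (dvd_mul_right (q - 1) (q + 1))]
    exact Nat.mul_div_cancel_left _ (by omega)
  have hA1 : A ^ (q + 1) = 1 := by rw [← horderA]; exact pow_orderOf_eq_one A
  have hAq : A ^ q = A⁻¹ := eq_inv_of_mul_eq_one_left (by rw [← pow_succ]; exact hA1)
  have hUq : U ^ q = U * A := by
    rw [hAdef]
    conv_lhs => rw [show q = 1 + (q - 1) by omega]
    rw [pow_add, pow_one]
  -- key commutation of nat-pow with zpow
  have hswap : ∀ (B : Kˣ) (i : ℤ) (m : ℕ), (B ^ i) ^ m = (B ^ m) ^ i := by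
    intro B i m
    rw [← zpow_natCast (B ^ i) m, ← zpow_natCast B m, ← zpow_mul, ← zpow_mul, mul_comm]
  have key : ∀ i : ℤ, (U * A ^ i) ^ q = U * A ^ (1 - i) := by
    intro i
    rw [mul_pow, hswap A i q, hUq, hAq, inv_zpow, ← zpow_neg, zpow_sub, zpow_one,
      zpow_neg, mul_assoc]
  have keyroot : ∀ i : ℤ, (U * A ^ i) ^ (q + 1) = U ^ (q + 1) := by
    intro i
    rw [mul_pow, hswap A i (q + 1), hA1, one_zpow, mul_one]
  have hcoe : ∀ i : ℤ, ω * α ^ i = ((U * A ^ i : Kˣ) : K) := by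
    intro i
    rw [Units.val_mul, Units.val_zpow_eq_zpow_val, hAval, hU]
  -- injectivity of the root map on the index interval
  have hinj : ∀ i ∈ Finset.Icc (-(r : ℤ) + 1) (r : ℤ), ∀ j ∈ Finset.Icc (-(r : ℤ) + 1) (r : ℤ),
      ω * α ^ i = ω * α ^ j → i = j := by
    intro i hi j hj hij
    rw [Finset.mem_Icc] at hi hj
    rw [hcoe i, hcoe j] at hij
    have hUeq : U * A ^ i = U * A ^ j := Units.ext hij
    have hAeq : A ^ (i - j) = 1 := by
      have h := mul_left_cancel hUeq
      rw [zpow_sub, h, mul_inv_cancel]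
    have hdvd : ((q : ℤ) + 1) ∣ (i - j) := by
      have := orderOf_dvd_iff_zpow_eq_one.mpr hAeq
      rwa [horderA, Nat.cast_add, Nat.cast_one] at this
    by_contra hne
    have hpos : 0 < |i - j| := abs_pos.mpr (sub_ne_zero.mpr hne)
    have hge : (q : ℤ) + 1 ≤ |i - j| := Int.le_of_dvd hpos ((dvd_abs _ _).mpr hdvd)
    have hub : |i - j| ≤ 2 * (r : ℤ) - 1 := abs_le.mpr ⟨by omega, by omega⟩
    omega
  -- the roots, as a finset
  set t : Finset K := (Finset.Icc (-(r : ℤ) + 1) (r : ℤ)).image (fun i => ω * α ^ i) with htdef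
  have hg₃' : g₃ = ∏ x ∈ t, (X - C x) := by
    rw [hg₃, htdef, Finset.prod_image hinj]
  -- divisibility
  set P : K[X] := X ^ (q + 1) - C (ω ^ (q + 1)) with hPdef
  have hP0 : P ≠ 0 := X_pow_sub_C_ne_zero (by omega) _
  have hroots : ∀ x ∈ t, x ∈ P.roots := by
    intro x hx
    rw [htdef, Finset.mem_image] at hx
    obtain ⟨i, -, rfl⟩ := hx
    rw [Polynomial.mem_roots hP0]
    have hx1 : (ω * α ^ i) ^ (q + 1) = ω ^ (q + 1) := by
      rw [hcoe i, ← Units.val_pow_eq_pow_val, keyroot i, Units.val_pow_eq_pow_val, hU]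
    simp only [hPdef, IsRoot, eval_sub, eval_pow, eval_X, eval_C, hx1, sub_self]
  have hle : t.val ≤ P.roots := (Multiset.le_iff_subset t.nodup).mpr
    (fun x hx => hroots x (Finset.mem_val.mp hx))
  have hdvd : g₃ ∣ P := by
    rw [hg₃', Finset.prod_eq_multiset_prod]
    exact dvd_trans (Multiset.prod_dvd_prod_of_le (Multiset.map_le_map hle))
      (prod_multiset_X_sub_C_dvd P)
  -- ω^(q+1) is fixed by Frobenius
  have homega_fix : (ω ^ (q + 1)) ^ q = ω ^ (q + 1) := by
    rw [← pow_mul]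
    have h2 : (q + 1) * q = (q ^ 2 - 1) + (q + 1) := by
      have h1 : 1 ≤ q ^ 2 := Nat.one_le_pow _ _ (by omega)
      have h4 : (q ^ 2 - 1) + (q + 1) = q ^ 2 + q := by omega
      rw [h4]; ring
    rw [h2, pow_add, hω1, one_mul]
  have homega_mem : ω ^ (q + 1) ∈ Set.range (algebraMap F K) :=
    aux_mem_range_of_pow_eq hF homega_fix
  have homega_ne : ω ^ (q + 1) ≠ 1 := by
    intro h
    have hd := orderOf_dvd_of_pow_eq_one h
    rw [hω] at hd
    have hle' := Nat.le_of_dvd (by omega) hd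
    have : q * q ≥ 3 * q := Nat.mul_le_mul_right q (by omega)
    omega
  -- Frobenius as a ring hom x ↦ x^q on K
  haveI : CharP K (ringChar F) :=
    charP_of_injective_algebraMap (algebraMap F K).injective (ringChar F)
  obtain ⟨n, hp, hcard⟩ := FiniteField.card F (ringChar F)
  haveI := Fact.mk hp
  set φ : K →+* K := (frobenius K (ringChar F)) ^ (n : ℕ) with hφdef
  have hφ : ∀ x : K, φ x = x ^ q := by
    intro x
    rw [hφdef, RingHom.coe_pow, iterate_frobenius, ← hcard, hF]
  -- g₃ is fixed by Frobenius
  have hval : ∀ i : ℤ, φ (ω * α ^ i) = ω * α ^ (1 - i) := by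
    intro i
    rw [hφ, hcoe i, ← Units.val_pow_eq_pow_val, key i, ← hcoe (1 - i)]
  have hmapg : g₃.map φ = g₃ := by
    rw [hg₃, Polynomial.map_prod]
    simp only [Polynomial.map_sub, Polynomial.map_X, Polynomial.map_C, hval]
    refine Finset.prod_bij' (fun i _ => 1 - i) (fun i _ => 1 - i) ?_ ?_ ?_ ?_ ?_
    · intro a ha; simp only [Finset.mem_Icc] at ha ⊢; omega
    · intro a ha; simp only [Finset.mem_Icc] at ha ⊢; omega
    · intro a ha; omega
    · intro a ha; omega
    · intro a ha; dsimp only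
  have hcoeff : ∀ j, g₃.coeff j ∈ Set.range (algebraMap F K) := by
    intro j
    have h1 : φ (g₃.coeff j) = g₃.coeff j := by
      conv_rhs => rw [← hmapg]
      rw [Polynomial.coeff_map]
    rw [hφ] at h1
    exact aux_mem_range_of_pow_eq hF h1
  exact ⟨hcoeff, hdvd, homega_mem, homega_ne⟩
end

section
/- Let q be a prime power, let F_q ⊆ F_{q²}, let e ∈ F_{q²} with e ∉ F_q, let m ≥ 1 be an integer, and let c_0, …, c_{m−1} ∈ F_{q²}. Then every coefficient of the bivariate polynomial P(X, Y) = Σ_{i=0}^{m−1} [ c_i (X + eY)^{m−1−i}(X + e^q Y)^{m+i} + c_i^q (X + eY)^{m+i}(X + e^q Y)^{m−1−i} ] ∈ F_{q²}[X, Y] lies in the subfield F_q; that is, P is a homogeneous polynomial of degree 2m−1 with coefficients in F_q. -/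
open MvPolynomial

/-- Let `q` be a prime power, `F = 𝔽_q ⊆ K = 𝔽_{q²}`, let `e ∈ K` with
`e ∉ F`, let `m ≥ 1` be an integer, and let `c₀, …, c_{m−1} ∈ K`.  Then every coefficient of
the bivariate polynomial
`P(X, Y) = Σ_{i=0}^{m−1} [ cᵢ (X + eY)^{m−1−i}(X + e^q Y)^{m+i}
                           + cᵢ^q (X + eY)^{m+i}(X + e^q Y)^{m−1−i} ]`
lies in the subfield `F`; that is, `P` is a homogeneous polynomial of degree `2m−1` with
coefficients in `F`. -/
theorem coeffs_in_subfield_of_symmetrized_odd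
    (q m : ℕ) (F K : Type*) [Field F] [Fintype F] [Field K] [Fintype K] [Algebra F K]
    (hF : Fintype.card F = q) (hK : Fintype.card K = q ^ 2)
    (e : K) (he : e ∉ Set.range (algebraMap F K))
    (hm : 1 ≤ m) (c : ℕ → K)
    (P : MvPolynomial (Fin 2) K)
    (hP : P = ∑ i ∈ Finset.range m,
      (C (c i) * (X 0 + C e * X 1) ^ (m - 1 - i) * (X 0 + C (e ^ q) * X 1) ^ (m + i)
       + C (c i ^ q) * (X 0 + C e * X 1) ^ (m + i) * (X 0 + C (e ^ q) * X 1) ^ (m - 1 - i))) :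
    (∀ d : Fin 2 →₀ ℕ, MvPolynomial.coeff d P ∈ Set.range (algebraMap F K)) ∧
    P.IsHomogeneous (2 * m - 1) := by
  classical
  constructor
  · -- characteristic setup
    haveI : CharP F (ringChar F) := ringChar.charP F
    haveI hfact : Fact (ringChar F).Prime := ⟨CharP.char_is_prime F _⟩
    haveI : CharP K (ringChar F) :=
      charP_of_injective_algebraMap (algebraMap F K).injective _
    obtain ⟨n, hp, hq⟩ := FiniteField.card F (ringChar F)
    rw [hF] at hq
    -- the q-power Frobenius
    set σ : K →+* K := iterateFrobenius K (ringChar F) n with hσ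
    have hσx : ∀ x : K, σ x = x ^ q := fun x => by
      rw [hσ, iterateFrobenius_def, ← hq]
    -- fixed points of σ are exactly the image of F
    have hq1 : 1 < q := hF ▸ Fintype.one_lt_card
    have key : ∀ x : K, x ^ q = x → x ∈ Set.range (algebraMap F K) := by
      intro x hx
      set f : Polynomial K := Polynomial.X ^ q - Polynomial.X with hf
      have hf0 : f ≠ 0 := FiniteField.X_pow_card_sub_X_ne_zero K hq1
      have hdeg : f.natDegree = q := FiniteField.X_pow_card_sub_X_natDegree_eq K hq1
      have hroots : f.roots.toFinset.card ≤ q := by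
        calc f.roots.toFinset.card ≤ Multiset.card f.roots := f.roots.toFinset_card_le
          _ ≤ f.natDegree := f.card_roots'
          _ = q := hdeg
      set T : Finset K := Finset.univ.image (algebraMap F K) with hT
      have hTcard : T.card = q := by
        rw [hT, Finset.card_image_of_injective _ (algebraMap F K).injective,
          Finset.card_univ, hF]
      have hsub : T ⊆ f.roots.toFinset := by
        intro y hy
        simp only [hT, Finset.mem_image] at hy
        obtain ⟨z, -, rfl⟩ := hy
        rw [Multiset.mem_toFinset, Polynomial.mem_roots hf0]
        have hz : z ^ q = z := by rw [← hF]; exact FiniteField.pow_card z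
        simp [hf, ← map_pow, hz]
      have hTeq : T = f.roots.toFinset :=
        Finset.eq_of_subset_of_card_le hsub (hTcard ▸ hroots)
      have hxT : x ∈ T := by
        rw [hTeq, Multiset.mem_toFinset, Polynomial.mem_roots hf0]
        simp [hf, hx]
      simp only [hT, Finset.mem_image] at hxT
      obtain ⟨z, -, rfl⟩ := hxT
      exact ⟨z, rfl⟩
    -- P is fixed by σ
    have hKpow : ∀ x : K, (x ^ q) ^ q = x := fun x => by
      rw [← pow_mul, ← sq, ← hK, FiniteField.pow_card]
    have hA : MvPolynomial.map σ (X 0 + C e * X 1) = X 0 + C (e ^ q) * X 1 := by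
      rw [map_add, map_mul, MvPolynomial.map_C, MvPolynomial.map_X, MvPolynomial.map_X, hσx]
    have hB : MvPolynomial.map σ (X 0 + C (e ^ q) * X 1) = X 0 + C e * X 1 := by
      rw [map_add, map_mul, MvPolynomial.map_C, MvPolynomial.map_X, MvPolynomial.map_X, hσx,
        hKpow]
    have hmap : MvPolynomial.map σ P = P := by
      rw [hP, map_sum]
      refine Finset.sum_congr rfl fun i _ => ?_
      have mp : ∀ (g : MvPolynomial (Fin 2) K) (k : ℕ),
          MvPolynomial.map σ (g ^ k) = (MvPolynomial.map σ g) ^ k :=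
        fun g k => map_pow _ g k
      have mm : ∀ (g h : MvPolynomial (Fin 2) K),
          MvPolynomial.map σ (g * h) = MvPolynomial.map σ g * MvPolynomial.map σ h :=
        fun g h => map_mul _ g h
      have ma : ∀ (g h : MvPolynomial (Fin 2) K),
          MvPolynomial.map σ (g + h) = MvPolynomial.map σ g + MvPolynomial.map σ h :=
        fun g h => map_add _ g h
      simp only [ma, mm, mp, MvPolynomial.map_C, MvPolynomial.map_X, hσx, hKpow]
      ring
    intro d
    refine key _ ?_
    have := congrArg (MvPolynomial.coeff d) hmap
    rwa [MvPolynomial.coeff_map, hσx] at this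
  · rw [hP]
    apply MvPolynomial.IsHomogeneous.sum
    intro i hi
    rw [Finset.mem_range] at hi
    have h1 : (X (R := K) (σ := Fin 2) 0 + C e * X 1).IsHomogeneous 1 :=
      (isHomogeneous_X _ _).add ((isHomogeneous_C _ _).mul (isHomogeneous_X _ _))
    have h2 : (X (R := K) (σ := Fin 2) 0 + C (e ^ q) * X 1).IsHomogeneous 1 :=
      (isHomogeneous_X _ _).add ((isHomogeneous_C _ _).mul (isHomogeneous_X _ _))
    have e1 : 0 + 1 * (m - 1 - i) + 1 * (m + i) = 2 * m - 1 := by omega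
    have e2 : 0 + 1 * (m + i) + 1 * (m - 1 - i) = 2 * m - 1 := by omega
    exact (e1 ▸ ((isHomogeneous_C _ _).mul (h1.pow _)).mul (h2.pow _)).add
      (e2 ▸ ((isHomogeneous_C _ _).mul (h1.pow _)).mul (h2.pow _))
end

section
/- Let q and k both be odd, q a prime power, 1 ≤ k ≤ q, and write k = q − 2r. Let ω be a primitive element of F_{q²}, α = ω^{q−1}, and let c_0, …, c_{2r+1} ∈ F_q be defined by ∏_{i=−r}^{r} (X − α^i) = Σ_{j=0}^{2r+1} c_j X^j. Fix β ∈ F_{q²} with β + β^q = 1, and for a ∈ {0, …, k−1} define h_a(X) = Σ_{i=1}^{(q−1)/2} Σ_{j=0}^{2r+1} c_j α^{i(j+a)} X^{(q+1)/2 − i} + Σ_{j=0}^{2r+1} c_j (−1)^{j+a} β + Σ_{j=0}^{2r+1} c_j β X^{(q+1)/2}. Then deg h_a ≤ (k−1)/2; in particular the coefficients of X^m in h_a vanish for all m with (k−1)/2 < m ≤ (q+1)/2. -/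
open Polynomial

/-- Let `q` and `k` both be odd, `q` a prime power, `1 ≤ k ≤ q`, and write
`k = q − 2r`.  Let `ω` be a primitive element of `K = 𝔽_{q²}`, `α = ω^{q−1}`, and let
`c₀, …, c_{2r+1} ∈ F = 𝔽_q` be defined by `∏_{i=−r}^{r} (X − α^i) = Σ_{j=0}^{2r+1} c_j X^j`.
Fix `β ∈ K` with `β + β^q = 1`, and for `a ∈ {0, …, k−1}` define
`h_a(X) = Σ_{i=1}^{(q−1)/2} Σ_{j=0}^{2r+1} c_j α^{i(j+a)} X^{(q+1)/2 − i}
          + Σ_{j=0}^{2r+1} c_j (−1)^{j+a} β + Σ_{j=0}^{2r+1} c_j β X^{(q+1)/2}`.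
Then `deg h_a ≤ (k−1)/2`; in particular the coefficients of `X^m` in `h_a` vanish for all
`m` with `(k−1)/2 < m ≤ (q+1)/2`. -/
theorem ha_degree_bound_odd_odd
    (q k r : ℕ) (F K : Type*) [Field F] [Fintype F] [Field K] [Fintype K] [Algebra F K]
    (hF : Fintype.card F = q) (hK : Fintype.card K = q ^ 2)
    (hqodd : Odd q) (hkodd : Odd k) (hk1 : 1 ≤ k) (hkq : k ≤ q)
    (hkr : (k : ℤ) = q - 2 * r)
    (ω : K) (hω : orderOf ω = q ^ 2 - 1)
    (α : K) (hα : α = ω ^ (q - 1))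
    (c : ℕ → F)
    (hc : ∀ j, algebraMap F K (c j) =
      (∏ i ∈ Finset.Icc (-(r : ℤ)) (r : ℤ), (X - C (α ^ i))).coeff j)
    (β : K) (hβ : β + β ^ q = 1)
    (a : ℕ) (ha : a < k)
    (h : Polynomial K)
    (hh : h = ∑ i ∈ Finset.Icc 1 ((q - 1) / 2), ∑ j ∈ Finset.range (2 * r + 2),
        C (algebraMap F K (c j) * α ^ (i * (j + a))) * X ^ ((q + 1) / 2 - i)
      + C (∑ j ∈ Finset.range (2 * r + 2),
          algebraMap F K (c j) * (-1 : K) ^ (j + a) * β)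
      + C (∑ j ∈ Finset.range (2 * r + 2), algebraMap F K (c j) * β) * X ^ ((q + 1) / 2)) :
    h.degree ≤ ((k - 1) / 2 : ℕ) ∧
    ∀ m : ℕ, (k - 1) / 2 < m → m ≤ (q + 1) / 2 → h.coeff m = 0 := by
  have hq : q = k + 2 * r := by omega
  have hq2 : q % 2 = 1 := Nat.odd_iff.mp hqodd
  have hk2 : k % 2 = 1 := Nat.odd_iff.mp hkodd
  set g : K[X] := ∏ i ∈ Finset.Icc (-(r : ℤ)) (r : ℤ), (X - C (α ^ i)) with hg
  have hcard : (Finset.Icc (-(r : ℤ)) (r : ℤ)).card = 2 * r + 1 := by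
    rw [Int.card_Icc]; omega
  have hdeg : g.natDegree = 2 * r + 1 := by
    rw [hg, natDegree_prod_of_monic _ _ (fun i _ => monic_X_sub_C _)]
    simp [natDegree_X_sub_C, hcard]
  have hevalA : ∀ x : K, ∑ j ∈ Finset.range (2 * r + 2),
      algebraMap F K (c j) * x ^ j = g.eval x := by
    intro x
    rw [eval_eq_sum_range, hdeg]
    exact Finset.sum_congr rfl fun j _ => by rw [hc j]
  have hroot : ∀ i : ℕ, i ≤ r → g.eval (α ^ i) = 0 := by
    intro i hi
    rw [hg, eval_prod]
    apply Finset.prod_eq_zero (i := (i : ℤ))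
    · simp only [Finset.mem_Icc]
      constructor <;> omega
    · simp [zpow_natCast]
  have key : ∀ m : ℕ, (k - 1) / 2 < m → h.coeff m = 0 := by
    intro m hm
    have hm1 : 1 ≤ m := by omega
    rw [hh, coeff_add, coeff_add]
    have t3 : (C (∑ j ∈ Finset.range (2 * r + 2), algebraMap F K (c j) * β) *
        X ^ ((q + 1) / 2)).coeff m = 0 := by
      have hsum : (∑ j ∈ Finset.range (2 * r + 2), algebraMap F K (c j) * β) = 0 := by
        have h1 : g.eval 1 = 0 := by simpa using hroot 0 (Nat.zero_le r)
        calc ∑ j ∈ Finset.range (2 * r + 2), algebraMap F K (c j) * β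
            = (∑ j ∈ Finset.range (2 * r + 2), algebraMap F K (c j) * (1:K) ^ j) * β := by
              rw [Finset.sum_mul]; simp
          _ = g.eval 1 * β := by rw [hevalA]
          _ = 0 := by rw [h1, zero_mul]
      rw [hsum]; simp
    have t2 : (C (∑ j ∈ Finset.range (2 * r + 2),
        algebraMap F K (c j) * (-1 : K) ^ (j + a) * β)).coeff m = 0 := by
      rw [coeff_C, if_neg (by omega)]
    have t1 : ((∑ i ∈ Finset.Icc 1 ((q - 1) / 2), ∑ j ∈ Finset.range (2 * r + 2),
        C (algebraMap F K (c j) * α ^ (i * (j + a))) * X ^ ((q + 1) / 2 - i)) :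
        Polynomial K).coeff m = 0 := by
      rw [finset_sum_coeff]
      apply Finset.sum_eq_zero
      intro i hi
      simp only [Finset.mem_Icc] at hi
      have hterm : (∑ j ∈ Finset.range (2 * r + 2),
          C (algebraMap F K (c j) * α ^ (i * (j + a))) * X ^ ((q + 1) / 2 - i))
          = C (∑ j ∈ Finset.range (2 * r + 2),
              algebraMap F K (c j) * α ^ (i * (j + a))) * X ^ ((q + 1) / 2 - i) := by
        rw [map_sum, Finset.sum_mul]
      rw [hterm, coeff_C_mul, coeff_X_pow]
      by_cases hcase : (q + 1) / 2 - i = m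
      · have hir : i ≤ r := by omega
        have hsum0 : (∑ j ∈ Finset.range (2 * r + 2),
            algebraMap F K (c j) * α ^ (i * (j + a))) = 0 := by
          have heq : ∀ j, algebraMap F K (c j) * α ^ (i * (j + a))
              = (algebraMap F K (c j) * (α ^ i) ^ j) * α ^ (i * a) := by
            intro j
            rw [Nat.mul_add, pow_add, ← pow_mul]
            ring
          calc (∑ j ∈ Finset.range (2 * r + 2), algebraMap F K (c j) * α ^ (i * (j + a)))
              = (∑ j ∈ Finset.range (2 * r + 2),
                  algebraMap F K (c j) * (α ^ i) ^ j) * α ^ (i * a) := by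
                rw [Finset.sum_mul]
                exact Finset.sum_congr rfl fun j _ => heq j
            _ = g.eval (α ^ i) * α ^ (i * a) := by rw [hevalA]
            _ = 0 := by rw [hroot i hir, zero_mul]
        rw [hsum0]; simp
      · rw [if_neg (fun e => hcase e.symm), mul_zero]
    rw [t1, t2, t3, add_zero, add_zero]
  refine ⟨?_, fun m hm _ => key m hm⟩
  rw [Polynomial.degree_le_iff_coeff_zero]
  intro m hm
  exact key m (by exact_mod_cast hm)
end

section
/- Let q and k both be odd, q a prime power, 1 ≤ k ≤ q, and write k = q − 2r. Let ω be a primitive element of F_{q²}, α = ω^{q−1}, and let c_0, …, c_{2r+1} ∈ F_q be defined by ∏_{i=−r}^{r} (X − α^i) = Σ_{j=0}^{2r+1} c_j X^j; set c_j = 0 for j < 0 or j > 2r+1. Fix β ∈ F_{q²} with β + β^q = 1, and for a ∈ {0, …, k−1} define h_a(X) = Σ_{i=1}^{(q−1)/2} Σ_{j=0}^{2r+1} c_j α^{i(j+a)} X^{(q+1)/2 − i} + Σ_{j=0}^{2r+1} c_j (−1)^{j+a} β + Σ_{j=0}^{2r+1} c_j β X^{(q+1)/2}. Then for every s ∈ {0,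 1, …, q}, h_a(α^s) + h_a(α^s)^q = (−1)^s c_{s−a}. -/
open Polynomial

/-- Let `q` and `k` both be odd, `q` a prime power, `1 ≤ k ≤ q`, and write
`k = q − 2r`.  Let `ω` be a primitive element of `K = 𝔽_{q²}`, `α = ω^{q−1}`, and let
`c₀, …, c_{2r+1} ∈ F = 𝔽_q` be defined by `∏_{i=−r}^{r} (X − α^i) = Σ_{j=0}^{2r+1} c_j X^j`;
set `c_j = 0` for `j < 0` or `j > 2r+1`.  Fix `β ∈ K` with `β + β^q = 1`, and for
`a ∈ {0, …, k−1}` define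
`h_a(X) = Σ_{i=1}^{(q−1)/2} Σ_{j=0}^{2r+1} c_j α^{i(j+a)} X^{(q+1)/2 − i}
          + Σ_{j=0}^{2r+1} c_j (−1)^{j+a} β + Σ_{j=0}^{2r+1} c_j β X^{(q+1)/2}`.
Then for every `s ∈ {0, 1, …, q}`, `h_a(α^s) + h_a(α^s)^q = (−1)^s c_{s−a}`. -/
theorem ha_evaluation_odd_odd
    (q k r : ℕ) (F K : Type*) [Field F] [Fintype F] [Field K] [Fintype K] [Algebra F K]
    (hF : Fintype.card F = q) (hK : Fintype.card K = q ^ 2)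
    (hqodd : Odd q) (hkodd : Odd k) (hk1 : 1 ≤ k) (hkq : k ≤ q)
    (hkr : (k : ℤ) = q - 2 * r)
    (ω : K) (hω : orderOf ω = q ^ 2 - 1)
    (α : K) (hα : α = ω ^ (q - 1))
    (c : ℤ → F)
    (hc : ∀ j : ℤ, algebraMap F K (c j) =
      if 0 ≤ j then (∏ i ∈ Finset.Icc (-(r : ℤ)) (r : ℤ), (X - C (α ^ i))).coeff j.toNat
      else 0)
    (β : K) (hβ : β + β ^ q = 1)
    (a : ℕ) (ha : a < k)
    (h : Polynomial K)
    (hh : h = ∑ i ∈ Finset.Icc 1 ((q - 1) / 2), ∑ j ∈ Finset.range (2 * r + 2),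
        C (algebraMap F K (c j) * α ^ (i * (j + a))) * X ^ ((q + 1) / 2 - i)
      + C (∑ j ∈ Finset.range (2 * r + 2),
          algebraMap F K (c j) * (-1 : K) ^ (j + a) * β)
      + C (∑ j ∈ Finset.range (2 * r + 2), algebraMap F K (c j) * β) * X ^ ((q + 1) / 2)) :
    ∀ s : ℕ, s ≤ q →
      h.eval (α ^ s) + (h.eval (α ^ s)) ^ q =
        (-1 : K) ^ s * algebraMap F K (c ((s : ℤ) - (a : ℤ))) := by
  intro s hs
  -- basic numerics
  have hq2 : 2 ≤ q := hF ▸ Fintype.one_lt_card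
  obtain ⟨M, hM⟩ : ∃ M, q = 2 * M + 1 := hqodd
  have hM1 : (q + 1) / 2 = M + 1 := by omega
  have hM2 : (q - 1) / 2 = M := by omega
  -- order of α
  have hfac : (q - 1) * (q + 1) = q ^ 2 - 1 := by
    cases q with
    | zero => simp
    | succ n =>
      have h2 : (n + 1) ^ 2 = n * (n + 2) + 1 := by ring
      simp [h2]
  have hord : orderOf α = q + 1 := by
    have h1 : orderOf α = (q ^ 2 - 1) / Nat.gcd (q ^ 2 - 1) (q - 1) := by
      rw [hα, orderOf_pow' ω (by omega), hω]
    rw [h1, Nat.gcd_comm, Nat.gcd_eq_left ⟨q + 1, hfac.symm⟩,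
      Nat.div_eq_of_eq_mul_left (by omega) (by rw [← hfac, mul_comm])]
  have hα1 : α ^ (q + 1) = 1 := by rw [← hord]; exact pow_orderOf_eq_one α
  have hαne : α ≠ 0 := by
    intro h0; rw [h0, zero_pow (by omega)] at hα1; exact one_ne_zero hα1.symm
  have hαhalf : α ^ (M + 1) = -1 := by
    have hsq : α ^ (M+1) * α ^ (M+1) = 1 := by
      rw [← pow_add]; rw [show M+1+(M+1) = q+1 by omega]; exact hα1
    rcases mul_self_eq_one_iff.mp hsq with h1 | h1
    · exfalso
      have := orderOf_dvd_iff_pow_eq_one.mpr h1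
      rw [hord] at this
      have := Nat.le_of_dvd (by omega) this
      omega
    · exact h1
  -- characteristic / Frobenius
  haveI : CharP K (ringChar F) :=
    charP_of_injective_algebraMap (algebraMap F K).injective _
  obtain ⟨e, hpp, hqpe⟩ := FiniteField.card F (ringChar F)
  rw [hF] at hqpe
  haveI := Fact.mk hpp
  haveI : ExpChar K (ringChar F) := ExpChar.prime hpp
  have hqK : (q : K) = 0 := by
    rw [hqpe]
    push_cast
    rw [CharP.cast_eq_zero K (ringChar F), zero_pow e.ne_zero]
  have hfrobsum : ∀ {ι : Type} (t : Finset ι) (f : ι → K),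
      (∑ i ∈ t, f i) ^ q = ∑ i ∈ t, (f i) ^ q := by
    intro ι t f
    have := map_sum (iterateFrobenius K (ringChar F) e) f t
    simpa only [iterateFrobenius_def, ← hqpe] using this
  have hfrobadd : ∀ x y : K, (x + y) ^ q = x ^ q + y ^ q := by
    intro x y
    rw [hqpe]
    exact add_pow_char_pow x y (ringChar F) e
  -- fixed points
  have hCq : ∀ z : F, (algebraMap F K z) ^ q = algebraMap F K z := by
    intro z
    rw [← map_pow, ← hF, FiniteField.pow_card]
  have hnegq : (-1 : K) ^ q = -1 := Odd.neg_one_pow ⟨M, by omega⟩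
  -- zpow facts
  have hz1 : ∀ t : ℤ, α ^ (((q : ℤ) + 1) * t) = 1 := by
    intro t
    rw [zpow_mul, show ((q : ℤ) + 1) = ((q + 1 : ℕ) : ℤ) by push_cast; ring,
      zpow_natCast, hα1, one_zpow]
  have hconj : ∀ t : ℤ, (α ^ t) ^ q = α ^ (-t) := by
    intro t
    rw [← zpow_natCast (α ^ t) q, ← zpow_mul,
      show t * (q : ℤ) = ((q : ℤ) + 1) * t + (-t) by ring,
      zpow_add₀ hαne, hz1, one_mul]
  have hhalfz : ∀ t : ℤ, α ^ (((M : ℤ) + 1) * t) = (-1 : K) ^ t := by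
    intro t
    rw [zpow_mul, show ((M : ℤ) + 1) = ((M + 1 : ℕ) : ℤ) by push_cast; ring,
      zpow_natCast, hαhalf]
  have hexp : ∀ (s' i j b : ℕ), i ≤ M + 1 →
      α ^ (i * (j + b)) * (α ^ s') ^ (M + 1 - i)
        = (-1 : K) ^ s' * (α ^ ((j : ℤ) + b - s')) ^ i := by
    intro s' i j b hi
    rw [← pow_mul, ← pow_add, ← zpow_natCast α (i * (j + b) + s' * (M + 1 - i)),
      show ((i * (j + b) + s' * (M + 1 - i) : ℕ) : ℤ)
          = ((M : ℤ) + 1) * s' + ((j : ℤ) + b - s') * i by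
        push_cast [Nat.cast_sub hi]; ring,
      zpow_add₀ hαne, hhalfz, zpow_mul, zpow_natCast, zpow_natCast]
  -- bracket lemma
  have hbracket : ∀ u : K, u ^ (2 * M + 2) = 1 →
      1 + (∑ i ∈ Finset.Icc 1 M, u ^ i) + u ^ (M + 1)
        + (∑ i ∈ Finset.Icc 1 M, (u⁻¹) ^ i)
        = ∑ i ∈ Finset.range (2 * M + 2), u ^ i := by
    intro u h1
    have hu : u ≠ 0 := by
      intro h0; rw [h0, zero_pow (by omega)] at h1; exact one_ne_zero h1.symm
    have hinv : ∀ i : ℕ, i ≤ 2 * M + 2 → (u⁻¹) ^ i = u ^ (2 * M + 2 - i) := by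
      intro i hi
      have : u ^ (2 * M + 2 - i) * u ^ i = 1 := by
        rw [← pow_add, Nat.sub_add_cancel hi, h1]
      rw [inv_pow, inv_eq_of_mul_eq_one_left this]
    have hre : (∑ i ∈ Finset.Icc 1 M, (u⁻¹) ^ i)
        = ∑ i ∈ Finset.Icc (M + 2) (2 * M + 1), u ^ i := by
      refine Finset.sum_nbij' (fun i => 2 * M + 2 - i) (fun i => 2 * M + 2 - i)
        ?_ ?_ ?_ ?_ ?_ <;>
        intro a ha <;> simp only [Finset.mem_Icc] at * <;> first
          | omega
          | (rw [hinv a (by omega)])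
    rw [hre, Finset.range_eq_Ico, show 2 * M + 2 = (2 * M + 1) + 1 by omega,
      Finset.Ico_add_one_right_eq_Icc, ← Finset.Ioc_insert_left (Nat.zero_le _),
      Finset.sum_insert (by simp),
      ← Finset.sum_Ioc_consecutive _ (show 0 ≤ M + 1 by omega)
        (show M + 1 ≤ 2 * M + 1 by omega),
      ← Finset.sum_Ioc_consecutive _ (show 0 ≤ M by omega)
        (show M ≤ M + 1 by omega),
      Nat.Ioc_succ_singleton, Finset.sum_singleton,
      ← Finset.Icc_add_one_left_eq_Ioc, ← Finset.Icc_add_one_left_eq_Ioc]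
    rw [pow_zero, zero_add, show M + 1 + 1 = M + 2 by omega]
    ring
  -- geometric sums
  have hgeom0 : ∀ u : K, u ^ (2 * M + 2) = 1 → u ≠ 1 →
      ∑ i ∈ Finset.range (2 * M + 2), u ^ i = 0 := by
    intro u h1 hne
    rw [geom_sum_eq hne, h1, sub_self, zero_div]
  have hgeom1 : ∑ i ∈ Finset.range (2 * M + 2), (1 : K) ^ i = 1 := by
    simp only [one_pow, Finset.sum_const, Finset.card_range, nsmul_eq_mul, mul_one]
    rw [show 2 * M + 2 = q + 1 by omega]
    push_cast [hqK]
    ring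

  -- per-j root-of-unity facts
  have hu2 : ∀ j : ℕ, (α ^ ((j : ℤ) + a - s)) ^ (2 * M + 2) = 1 := by
    intro j
    rw [← zpow_natCast (α ^ ((j : ℤ) + a - s)) (2 * M + 2), ← zpow_mul,
      show ((j : ℤ) + a - s) * ((2 * M + 2 : ℕ) : ℤ)
          = ((q : ℤ) + 1) * ((j : ℤ) + a - s) by push_cast; rw [hM]; push_cast; ring]
    exact hz1 _
  have hTval : ∀ j ∈ Finset.range (2 * r + 2),
      (∑ i ∈ Finset.range (2 * M + 2), (α ^ ((j : ℤ) + a - s)) ^ i)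
        = if (j : ℤ) = (s : ℤ) - a then 1 else 0 := by
    intro j hj
    simp only [Finset.mem_range] at hj
    by_cases hjs : (j : ℤ) = (s : ℤ) - a
    · rw [if_pos hjs, show (j : ℤ) + a - s = 0 by omega, zpow_zero]
      exact hgeom1
    · rw [if_neg hjs]
      refine hgeom0 _ (hu2 j) ?_
      intro heq
      have hne0 : (j : ℤ) + a - s ≠ 0 := by omega
      have hble : ((j : ℤ) + a - s).natAbs ≤ q := by omega
      have hinv1 : α ^ (-((j : ℤ) + a - s)) = 1 := by
        rw [zpow_neg, heq, inv_one]
      have hnat : α ^ (((j : ℤ) + a - s).natAbs) = 1 := by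
        rcases le_or_gt 0 ((j : ℤ) + a - s) with hpos | hneg
        · rw [← zpow_natCast α, Int.natAbs_of_nonneg hpos]; exact heq
        · rw [← zpow_natCast α, show ((((j : ℤ) + a - s).natAbs : ℕ) : ℤ)
              = -((j : ℤ) + a - s) by omega]
          exact hinv1
      have := Nat.le_of_dvd (by omega) ((orderOf_dvd_iff_pow_eq_one).mpr hnat)
      rw [hord] at this
      omega
  -- the final sum over j
  have hsum : (∑ j ∈ Finset.range (2 * r + 2),
        algebraMap F K (c j) * (if (j : ℤ) = (s : ℤ) - a then 1 else 0))
      = algebraMap F K (c ((s : ℤ) - a)) := by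
    by_cases hcase : a ≤ s ∧ s - a ≤ 2 * r + 1
    · rw [Finset.sum_eq_single (s - a)]
      · rw [if_pos (by omega), mul_one]
        exact congrArg (algebraMap F K) (congrArg c (by omega))
      · intro j hj hne
        rw [if_neg (by simp only [Finset.mem_range] at hj; omega), mul_zero]
      · intro hmem
        simp only [Finset.mem_range] at hmem
        omega
    · push_neg at hcase
      have hz : algebraMap F K (c ((s : ℤ) - a)) = 0 := by
        rw [hc]
        rcases lt_or_ge ((s : ℤ) - a) 0 with hneg | hpos
        · rw [if_neg (by omega)]
        · rw [if_pos (by omega)]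
          apply Polynomial.coeff_eq_zero_of_natDegree_lt
          have hdeg : (∏ i ∈ Finset.Icc (-(r : ℤ)) (r : ℤ),
              (X - Polynomial.C (α ^ i))).natDegree ≤ 2 * r + 1 := by
            refine le_trans (Polynomial.natDegree_prod_le _ _) ?_
            have : ∀ i ∈ Finset.Icc (-(r : ℤ)) (r : ℤ),
                (X - Polynomial.C (α ^ i)).natDegree = 1 := fun i _ =>
              Polynomial.natDegree_X_sub_C _
            rw [Finset.sum_congr rfl this, Finset.sum_const, smul_eq_mul, mul_one,
              Int.card_Icc]
            omega
          have : 2 * r + 1 < ((s : ℤ) - a).toNat := by omega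
          omega
      rw [hz, Finset.sum_eq_zero]
      intro j hj
      simp only [Finset.mem_range] at hj
      rw [if_neg (by omega), mul_zero]
  -- middle term identity
  have humid : ∀ j : ℕ, (-1 : K) ^ s * (α ^ ((j : ℤ) + a - s)) ^ (M + 1)
      = (-1 : K) ^ (j + a) := by
    intro j
    rw [← zpow_natCast (α ^ ((j : ℤ) + a - s)) (M + 1), ← zpow_mul,
      show ((j : ℤ) + a - s) * ((M + 1 : ℕ) : ℤ)
          = ((M : ℤ) + 1) * ((j : ℤ) + a - s) by push_cast; ring,
      hhalfz,
      show ((j : ℤ) + a - s) = ((j + a : ℕ) : ℤ) - ((s : ℕ) : ℤ) by push_cast; ring,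
      zpow_sub₀ (by norm_num : (-1 : K) ≠ 0), zpow_natCast, zpow_natCast]
    field_simp
  -- conjugation of u-powers
  have hujq : ∀ j : ℕ, (α ^ ((j : ℤ) + a - s)) ^ q = (α ^ ((j : ℤ) + a - s))⁻¹ := by
    intro j
    rw [hconj, zpow_neg]
  have hx : (α ^ s) ^ (M + 1) = (-1 : K) ^ s := by
    rw [← pow_mul, mul_comm, pow_mul, hαhalf]
  have hβq : β ^ q = 1 - β := eq_sub_iff_add_eq.mpr (by rw [add_comm]; exact hβ)
  -- evaluate h
  rw [hM1, hM2] at hh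
  subst hh
  simp only [eval_add, eval_finset_sum, eval_mul, eval_C, eval_pow, eval_X]
  -- abbreviations
  set x := α ^ s with hxdef
  -- rewrite the three pieces and their Frobenius images as sums over j
  have e1 : (∑ i ∈ Finset.Icc 1 M, ∑ j ∈ Finset.range (2 * r + 2),
        algebraMap F K (c j) * α ^ (i * (j + a)) * x ^ (M + 1 - i))
      = ∑ j ∈ Finset.range (2 * r + 2), (-1 : K) ^ s *
          (algebraMap F K (c j) * ∑ i ∈ Finset.Icc 1 M, (α ^ ((j : ℤ) + a - s)) ^ i) := by
    rw [Finset.sum_comm]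
    refine Finset.sum_congr rfl fun j hj => ?_
    rw [Finset.mul_sum, Finset.mul_sum]
    refine Finset.sum_congr rfl fun i hi => ?_
    simp only [Finset.mem_Icc] at hi
    rw [mul_assoc, hxdef, hexp s i j a (by omega)]
    ring
  have e1q : (∑ i ∈ Finset.Icc 1 M, ∑ j ∈ Finset.range (2 * r + 2),
        algebraMap F K (c j) * α ^ (i * (j + a)) * x ^ (M + 1 - i)) ^ q
      = ∑ j ∈ Finset.range (2 * r + 2), (-1 : K) ^ s *
          (algebraMap F K (c j) *
            ∑ i ∈ Finset.Icc 1 M, ((α ^ ((j : ℤ) + a - s))⁻¹) ^ i) := by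
    simp only [hfrobsum]
    rw [Finset.sum_comm]
    refine Finset.sum_congr rfl fun j hj => ?_
    rw [Finset.mul_sum, Finset.mul_sum]
    refine Finset.sum_congr rfl fun i hi => ?_
    simp only [Finset.mem_Icc] at hi
    rw [mul_assoc, hxdef, hexp s i j a (by omega), mul_pow, mul_pow,
      ← pow_mul, mul_comm s q, pow_mul, hnegq, hCq, ← pow_mul, mul_comm i q,
      pow_mul, hujq]
    ring
  have e2q : (∑ j ∈ Finset.range (2 * r + 2),
        algebraMap F K (c j) * (-1 : K) ^ (j + a) * β) ^ q
      = ∑ j ∈ Finset.range (2 * r + 2),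
          algebraMap F K (c j) * (-1 : K) ^ (j + a) * (1 - β) := by
    rw [hfrobsum]
    refine Finset.sum_congr rfl fun j hj => ?_
    rw [mul_pow, mul_pow, hCq, hβq, ← pow_mul, mul_comm (j + a) q, pow_mul, hnegq]
  have e3q : ((∑ j ∈ Finset.range (2 * r + 2), algebraMap F K (c j) * β)
        * x ^ (M + 1)) ^ q
      = (∑ j ∈ Finset.range (2 * r + 2), algebraMap F K (c j) * (1 - β))
        * (-1 : K) ^ s := by
    rw [mul_pow, hx, hfrobsum, ← pow_mul, mul_comm s q, pow_mul, hnegq]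
    congr 1
    refine Finset.sum_congr rfl fun j hj => ?_
    rw [mul_pow, hCq, hβq]
  rw [hfrobadd, hfrobadd, e1q, e2q, e3q, e1, hx, ← hsum, Finset.mul_sum,
    Finset.sum_mul, Finset.sum_mul]
  simp only [← Finset.sum_add_distrib]
  refine Finset.sum_congr rfl fun j hj => ?_
  rw [← hTval j hj, ← hbracket _ (hu2 j), ← humid j]
  ring
end

section
/- Let q and k both be even, q a prime power, 1 ≤ k ≤ q, and write k = q − 2r. Let ω be a primitive element of F_{q²}, α = ω^{q−1}, and let c_0, …, c_{2r+1} ∈ F_q be defined by ∏_{i=−r}^{r} (X − α^i) = Σ_{j=0}^{2r+1} c_j X^j. Fix β ∈ F_{q²} with β + β^q = 1, and for a ∈ {0, …, k−1} define h_a(X) = Σ_{i=1}^{q/2} Σ_{j=0}^{2r+1} c_j α^{i(j+a)} X^{q/2 − i} + Σ_{j=0}^{2r+1} c_j β X^{q/2}. Then deg h_a ≤ k/2 − 1; in particular the coefficients of X^m in h_a vanish for all m with k/2 − 1 < m ≤ q/2. -/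
open Polynomial

/-- Let `q` and `k` both be even, `q` a prime power, `1 ≤ k ≤ q`, and write
`k = q − 2r`.  Let `ω` be a primitive element of `K = 𝔽_{q²}`, `α = ω^{q−1}`, and let
`c₀, …, c_{2r+1} ∈ F = 𝔽_q` be defined by `∏_{i=−r}^{r} (X − α^i) = Σ_{j=0}^{2r+1} c_j X^j`.
Fix `β ∈ K` with `β + β^q = 1`, and for `a ∈ {0, …, k−1}` define
`h_a(X) = Σ_{i=1}^{q/2} Σ_{j=0}^{2r+1} c_j α^{i(j+a)} X^{q/2 − i}
          + Σ_{j=0}^{2r+1} c_j β X^{q/2}`.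
Then `deg h_a ≤ k/2 − 1`; in particular the coefficients of `X^m` in `h_a` vanish for all
`m` with `k/2 − 1 < m ≤ q/2`. -/
theorem ha_degree_bound_even_even
    (q k r : ℕ) (F K : Type*) [Field F] [Fintype F] [Field K] [Fintype K] [Algebra F K]
    (hF : Fintype.card F = q) (hK : Fintype.card K = q ^ 2)
    (hqeven : Even q) (hkeven : Even k) (hk1 : 1 ≤ k) (hkq : k ≤ q)
    (hkr : (k : ℤ) = q - 2 * r)
    (ω : K) (hω : orderOf ω = q ^ 2 - 1)
    (α : K) (hα : α = ω ^ (q - 1))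
    (c : ℕ → F)
    (hc : ∀ j, algebraMap F K (c j) =
      (∏ i ∈ Finset.Icc (-(r : ℤ)) (r : ℤ), (X - C (α ^ i))).coeff j)
    (β : K) (hβ : β + β ^ q = 1)
    (a : ℕ) (ha : a < k)
    (h : Polynomial K)
    (hh : h = ∑ i ∈ Finset.Icc 1 (q / 2), ∑ j ∈ Finset.range (2 * r + 2),
        C (algebraMap F K (c j) * α ^ (i * (j + a))) * X ^ (q / 2 - i)
      + C (∑ j ∈ Finset.range (2 * r + 2), algebraMap F K (c j) * β) * X ^ (q / 2)) :
    h.degree ≤ (k / 2 - 1 : ℕ) ∧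
    ∀ m : ℕ, k / 2 - 1 < m → m ≤ q / 2 → h.coeff m = 0 := by
  obtain ⟨t, ht⟩ := hkeven
  obtain ⟨s, hs⟩ := hqeven
  have hhalf : q / 2 = k / 2 + r := by omega
  set g : Polynomial K := ∏ i ∈ Finset.Icc (-(r : ℤ)) (r : ℤ), (X - C (α ^ i)) with hg
  have hdeg : g.natDegree = 2 * r + 1 := by
    rw [hg, Polynomial.natDegree_prod _ _ (fun i _ => X_sub_C_ne_zero _)]
    simp only [natDegree_X_sub_C, Finset.sum_const, smul_eq_mul, mul_one, Int.card_Icc]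
    omega
  have heval : ∀ x : K, ∑ j ∈ Finset.range (2 * r + 2), algebraMap F K (c j) * x ^ j
      = g.eval x := by
    intro x
    rw [Polynomial.eval_eq_sum_range, hdeg]
    exact Finset.sum_congr rfl fun j _ => by rw [hc j]
  have hroot : ∀ i : ℕ, i ≤ r → g.eval ((α : K) ^ i) = 0 := by
    intro i hi
    rw [hg, Polynomial.eval_prod]
    apply Finset.prod_eq_zero (i := (i : ℤ))
    · rw [Finset.mem_Icc]; omega
    · rw [eval_sub, eval_X, eval_C, zpow_natCast, sub_self]
  have hsum0 : (∑ j ∈ Finset.range (2 * r + 2), algebraMap F K (c j) * β) = 0 := by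
    have h1 : ∑ j ∈ Finset.range (2 * r + 2), algebraMap F K (c j) = g.eval 1 := by
      simpa using heval 1
    calc (∑ j ∈ Finset.range (2 * r + 2), algebraMap F K (c j) * β)
        = (∑ j ∈ Finset.range (2 * r + 2), algebraMap F K (c j)) * β := by
          rw [Finset.sum_mul]
      _ = 0 := by
          rw [h1]
          have := hroot 0 (Nat.zero_le r)
          rw [pow_zero] at this
          rw [this, zero_mul]
  have hcoeff : ∀ m : ℕ, k / 2 - 1 < m → h.coeff m = 0 := by
    intro m hm
    rw [hh, hsum0, map_zero, zero_mul, add_zero, Polynomial.finset_sum_coeff]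
    apply Finset.sum_eq_zero
    intro i hi
    rw [Finset.mem_Icc] at hi
    rw [Polynomial.finset_sum_coeff]
    by_cases hmi : m = q / 2 - i
    · have hir : i ≤ r := by omega
      have key : ∀ j, algebraMap F K (c j) * α ^ (i * (j + a))
          = (algebraMap F K (c j) * (α ^ i) ^ j) * α ^ (i * a) := by
        intro j
        rw [mul_add, pow_add, ← pow_mul, mul_assoc]
      calc ∑ j ∈ Finset.range (2 * r + 2),
            (C (algebraMap F K (c j) * α ^ (i * (j + a))) * X ^ (q / 2 - i)).coeff m
          = ∑ j ∈ Finset.range (2 * r + 2),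
            (algebraMap F K (c j) * (α ^ i) ^ j) * α ^ (i * a) := by
            apply Finset.sum_congr rfl
            intro j _
            rw [coeff_C_mul, coeff_X_pow, if_pos hmi, mul_one, key j]
        _ = (∑ j ∈ Finset.range (2 * r + 2),
              algebraMap F K (c j) * (α ^ i) ^ j) * α ^ (i * a) := by
            rw [Finset.sum_mul]
        _ = 0 := by rw [heval, hroot i hir, zero_mul]
    · apply Finset.sum_eq_zero
      intro j _
      rw [coeff_C_mul, coeff_X_pow, if_neg hmi, mul_zero]
  refine ⟨?_, fun m hm _ => hcoeff m hm⟩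
  rw [Polynomial.degree_le_iff_coeff_zero]
  intro m hm
  exact hcoeff m (by exact_mod_cast hm)
end

section
/- Let q be an even prime power and k odd with 1 ≤ k ≤ q, and write k = q − 2r − 1. Let ω be a primitive element of F_{q²}, α = ω^{q−1}, and let c_0, …, c_{2r+2} ∈ F_q be defined by ∏_{i=q/2−r}^{q/2+r+1} (X − α^i) = Σ_{j=0}^{2r+2} c_j X^j. Fix β ∈ F_{q²} with β + β^q = 1, and for a ∈ {0, …, k−1} define h_a(X) = Σ_{i=1}^{q/2} Σ_{j=0}^{2r+2} c_j α^{(i + q/2)(j+a)} X^{q/2 + 1 − i} + Σ_{j=0}^{2r+2} c_j β. Then deg h_a ≤ (k−1)/2; in particular the coefficients of X^m in h_a vanish for all m with (k−1)/2 < m ≤ q/2. -/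
open Polynomial

/-- Let `q` be an even prime power and `k` odd with `1 ≤ k ≤ q`, and write
`k = q − 2r − 1`.  Let `ω` be a primitive element of `K = 𝔽_{q²}`, `α = ω^{q−1}`, and let
`c₀, …, c_{2r+2} ∈ F = 𝔽_q` be defined by
`∏_{i=q/2−r}^{q/2+r+1} (X − α^i) = Σ_{j=0}^{2r+2} c_j X^j`.
Fix `β ∈ K` with `β + β^q = 1`, and for `a ∈ {0, …, k−1}` define
`h_a(X) = Σ_{i=1}^{q/2} Σ_{j=0}^{2r+2} c_j α^{(i + q/2)(j+a)} X^{q/2 + 1 − i}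
          + Σ_{j=0}^{2r+2} c_j β`.
Then `deg h_a ≤ (k−1)/2`; in particular the coefficients of `X^m` in `h_a` vanish for all
`m` with `(k−1)/2 < m ≤ q/2`. -/
theorem ha_degree_bound_odd_even
    (q k r : ℕ) (F K : Type*) [Field F] [Fintype F] [Field K] [Fintype K] [Algebra F K]
    (hF : Fintype.card F = q) (hK : Fintype.card K = q ^ 2)
    (hqeven : Even q) (hkodd : Odd k) (hk1 : 1 ≤ k) (hkq : k ≤ q)
    (hkr : (k : ℤ) = q - 2 * r - 1)
    (ω : K) (hω : orderOf ω = q ^ 2 - 1)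
    (α : K) (hα : α = ω ^ (q - 1))
    (c : ℕ → F)
    (hc : ∀ j, algebraMap F K (c j) =
      (∏ i ∈ Finset.Icc (q / 2 - r) (q / 2 + r + 1), (X - C (α ^ i))).coeff j)
    (β : K) (hβ : β + β ^ q = 1)
    (a : ℕ) (ha : a < k)
    (h : Polynomial K)
    (hh : h = ∑ i ∈ Finset.Icc 1 (q / 2), ∑ j ∈ Finset.range (2 * r + 3),
        C (algebraMap F K (c j) * α ^ ((i + q / 2) * (j + a))) * X ^ (q / 2 + 1 - i)
      + C (∑ j ∈ Finset.range (2 * r + 3), algebraMap F K (c j) * β)) :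
    h.degree ≤ ((k - 1) / 2 : ℕ) ∧
    ∀ m : ℕ, (k - 1) / 2 < m → m ≤ q / 2 → h.coeff m = 0 := by

  have hq2 : q / 2 * 2 = q := Nat.div_mul_cancel hqeven.two_dvd
  have hqk : k + 2 * r + 1 = q := by omega
  have hr : r + 1 ≤ q / 2 := by omega
  set P : Polynomial K := ∏ i ∈ Finset.Icc (q / 2 - r) (q / 2 + r + 1), (X - C (α ^ i))
    with hP
  have hdeg : P.natDegree = 2 * r + 2 := by
    rw [hP, Polynomial.natDegree_prod_of_monic _ _ (fun i _ => monic_X_sub_C _)]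
    simp only [natDegree_X_sub_C, Finset.sum_const, smul_eq_mul, mul_one, Nat.card_Icc]
    omega
  have hev : ∀ x : K, ∑ j ∈ Finset.range (2 * r + 3), algebraMap F K (c j) * x ^ j
      = P.eval x := by
    intro x
    rw [Polynomial.eval_eq_sum_range' (n := 2 * r + 3) (by omega)]
    exact Finset.sum_congr rfl fun j _ => by rw [hc]
  have hroot : ∀ s ∈ Finset.Icc (q / 2 - r) (q / 2 + r + 1), P.eval (α ^ s) = 0 := by
    intro s hs
    rw [hP, eval_prod]
    exact Finset.prod_eq_zero hs (by simp)
  have key : ∀ m : ℕ, (k - 1) / 2 < m → m ≤ q / 2 → h.coeff m = 0 := by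
    intro m hm1 hm2
    have hm0 : 1 ≤ m := by omega
    rw [hh, coeff_add, coeff_C, if_neg (by omega), add_zero, finset_sum_coeff]
    have hmain : (∑ j ∈ Finset.range (2 * r + 3),
        C (algebraMap F K (c j) * α ^ (((q / 2 + 1 - m) + q / 2) * (j + a))) *
          X ^ (q / 2 + 1 - (q / 2 + 1 - m))).coeff m = 0 := by
      rw [finset_sum_coeff]
      have hexp : q / 2 + 1 - (q / 2 + 1 - m) = m := by omega
      have hs : (q / 2 + 1 - m) + q / 2 ∈ Finset.Icc (q / 2 - r) (q / 2 + r + 1) := by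
        rw [Finset.mem_Icc]
        constructor <;> omega
      have hterm : ∀ j, algebraMap F K (c j) *
            α ^ (((q / 2 + 1 - m) + q / 2) * (j + a))
          = (algebraMap F K (c j) * (α ^ ((q / 2 + 1 - m) + q / 2)) ^ j) *
            α ^ (((q / 2 + 1 - m) + q / 2) * a) := by
        intro j
        rw [Nat.mul_add, pow_add, pow_mul]
        ring
      simp only [hexp, coeff_C_mul, coeff_X_pow, eq_self_iff_true, if_true, mul_one]
      simp only [hterm]
      rw [← Finset.sum_mul, hev, hroot _ hs, zero_mul]
    rw [Finset.sum_eq_single (q / 2 + 1 - m) _ _]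
    · exact hmain
    · intro i hi hne
      rw [Finset.mem_Icc] at hi
      rw [finset_sum_coeff]
      apply Finset.sum_eq_zero
      intro j _
      rw [coeff_C_mul, coeff_X_pow, if_neg (by omega), mul_zero]
    · intro hni
      exact absurd (Finset.mem_Icc.mpr (by omega)) hni
  refine ⟨?_, key⟩
  rw [degree_le_iff_coeff_zero]
  intro m hm
  have hm' : (k - 1) / 2 < m := by exact_mod_cast hm
  by_cases hmq : m ≤ q / 2
  · exact key m hm' hmq
  · rw [hh, coeff_add, coeff_C, if_neg (by omega), add_zero, finset_sum_coeff]
    apply Finset.sum_eq_zero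
    intro i hi
    rw [Finset.mem_Icc] at hi
    rw [finset_sum_coeff]
    apply Finset.sum_eq_zero
    intro j _
    rw [coeff_C_mul, coeff_X_pow, if_neg (by omega), mul_zero]
end

section
/- Let q be an even prime power and k odd with 1 ≤ k ≤ q, and write k = q − 2r − 1. Let ω be a primitive element of F_{q²}, α = ω^{q−1}, and let c_0, …, c_{2r+2} ∈ F_q be defined by ∏_{i=q/2−r}^{q/2+r+1} (X − α^i) = Σ_{j=0}^{2r+2} c_j X^j; set c_j = 0 for j < 0 or j > 2r+2. Fix β ∈ F_{q²} with β + β^q = 1, and for a ∈ {0, …, k−1} define h_a(X) = Σ_{i=1}^{q/2} Σ_{j=0}^{2r+2} c_j α^{(i + q/2)(j+a)} X^{q/2 + 1 − i} + Σ_{j=0}^{2r+2} c_j β. Then for every s ∈ {0, 1, …, q}, h_a(α^s) + h_a(α^s)^q = c_{s−a}. -/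
open Polynomial

private lemma sum_pow_split {R : Type*} [CommRing R] (u : R) (n : ℕ) :
    ∑ m ∈ Finset.range (2 * n + 1), u ^ m
      = 1 + ∑ i ∈ Finset.Icc 1 n, (u ^ (2 * i - 1) + u ^ (2 * i)) := by
  induction n with
  | zero => simp
  | succ n ih =>
    have h1 : 2 * (n + 1) + 1 = (2 * n + 1) + 1 + 1 := by ring
    rw [h1, Finset.sum_range_succ, Finset.sum_range_succ, ih,
      Finset.sum_Icc_succ_top (by omega : 1 ≤ n + 1)]
    have h2 : 2 * (n + 1) - 1 = 2 * n + 1 := by omega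
    have h3 : 2 * (n + 1) = 2 * n + 1 + 1 := by omega
    rw [h2, h3]
    ring

private lemma geom_vanish {K : Type*} [Field K] (u : K) (N : ℕ) (hu : u ^ N = 1)
    (hne : u ≠ 1) : ∑ m ∈ Finset.range N, u ^ m = 0 := by
  rw [geom_sum_eq hne, hu, sub_self, zero_div]

/-- Let `q` be an even prime power and `k` odd with `1 ≤ k ≤ q`, and write
`k = q − 2r − 1`.  Let `ω` be a primitive element of `K = 𝔽_{q²}`, `α = ω^{q−1}`, and let
`c₀, …, c_{2r+2} ∈ F = 𝔽_q` be defined by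
`∏_{i=q/2−r}^{q/2+r+1} (X − α^i) = Σ_{j=0}^{2r+2} c_j X^j`;
set `c_j = 0` for `j < 0` or `j > 2r+2`.  Fix `β ∈ K` with `β + β^q = 1`, and for
`a ∈ {0, …, k−1}` define
`h_a(X) = Σ_{i=1}^{q/2} Σ_{j=0}^{2r+2} c_j α^{(i + q/2)(j+a)} X^{q/2 + 1 − i}
          + Σ_{j=0}^{2r+2} c_j β`.
Then for every `s ∈ {0, 1, …, q}`, `h_a(α^s) + h_a(α^s)^q = c_{s−a}`. -/
theorem ha_evaluation_odd_even
    (q k r : ℕ) (F K : Type*) [Field F] [Fintype F] [Field K] [Fintype K] [Algebra F K]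
    (hF : Fintype.card F = q) (hK : Fintype.card K = q ^ 2)
    (hqeven : Even q) (hkodd : Odd k) (hk1 : 1 ≤ k) (hkq : k ≤ q)
    (hkr : (k : ℤ) = q - 2 * r - 1)
    (ω : K) (hω : orderOf ω = q ^ 2 - 1)
    (α : K) (hα : α = ω ^ (q - 1))
    (c : ℤ → F)
    (hc : ∀ j : ℤ, algebraMap F K (c j) =
      if 0 ≤ j then
        (∏ i ∈ Finset.Icc (q / 2 - r) (q / 2 + r + 1), (X - C (α ^ i))).coeff j.toNat
      else 0)
    (β : K) (hβ : β + β ^ q = 1)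
    (a : ℕ) (ha : a < k)
    (h : Polynomial K)
    (hh : h = ∑ i ∈ Finset.Icc 1 (q / 2), ∑ j ∈ Finset.range (2 * r + 3),
        C (algebraMap F K (c j) * α ^ ((i + q / 2) * (j + a))) * X ^ (q / 2 + 1 - i)
      + C (∑ j ∈ Finset.range (2 * r + 3), algebraMap F K (c j) * β)) :
    ∀ s : ℕ, s ≤ q →
      h.eval (α ^ s) + (h.eval (α ^ s)) ^ q =
        algebraMap F K (c ((s : ℤ) - (a : ℤ))) := by
  intro s hs
  -- numeric facts
  have hq2 : 2 ≤ q := by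
    have h1 : 1 < Fintype.card F := Fintype.one_lt_card
    omega
  have hkq' : k + 2 * r + 1 = q := by omega
  set n := q / 2 with hn
  have hq2n : q = 2 * n := by
    obtain ⟨t, ht⟩ := hqeven; omega
  have hrn : r + 1 ≤ n := by omega
  -- characteristic 2
  have hchar2 : ringChar K = 2 := by
    obtain ⟨m, hm, hcard⟩ := FiniteField.card K (ringChar K)
    have h2 : (2 : ℕ) ∣ (ringChar K) ^ (m : ℕ) := by
      rw [← hcard, hK]
      exact dvd_pow hqeven.two_dvd (by norm_num)
    have := Nat.Prime.dvd_of_dvd_pow Nat.prime_two h2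
    exact ((Nat.prime_dvd_prime_iff_eq Nat.prime_two hm).mp this).symm
  haveI hcp : CharP K 2 := by rw [← hchar2]; exact ringChar.charP K
  have htwo : (2 : K) = 0 := by
    have := CharP.cast_eq_zero K 2
    exact_mod_cast this
  -- q is a power of two
  have hqpow : ∃ m : ℕ, q = 2 ^ m := by
    have hchF : ringChar F = 2 := by
      obtain ⟨m, hm, hcard⟩ := FiniteField.card F (ringChar F)
      have h2 : (2 : ℕ) ∣ (ringChar F) ^ (m : ℕ) := by
        rw [← hcard, hF]
        exact hqeven.two_dvd
      have := Nat.Prime.dvd_of_dvd_pow Nat.prime_two h2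
      exact ((Nat.prime_dvd_prime_iff_eq Nat.prime_two hm).mp this).symm
    obtain ⟨m, hm, hcard⟩ := FiniteField.card F (ringChar F)
    exact ⟨m, by rw [← hF, hcard, hchF]⟩
  obtain ⟨m, hqm⟩ := hqpow
  -- Frobenius-type facts
  have hadd : ∀ x y : K, (x + y) ^ q = x ^ q + y ^ q := by
    intro x y
    haveI : Fact (Nat.Prime 2) := ⟨Nat.prime_two⟩
    rw [hqm]
    exact add_pow_char_pow x y 2 m
  have hsum : ∀ (t : Finset ℕ) (g : ℕ → K),
      (∑ x ∈ t, g x) ^ q = ∑ x ∈ t, (g x) ^ q := by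
    intro t g
    rw [hqm]
    simpa only [iterateFrobenius_def] using map_sum (iterateFrobenius K 2 m) g t
  have hfix : ∀ x : F, (algebraMap F K x) ^ q = algebraMap F K x := by
    intro x
    rw [← map_pow, ← hF, FiniteField.pow_card]
  -- order of α
  have hq21 : q ^ 2 - 1 = (q + 1) * (q - 1) := by
    have := Nat.sq_sub_sq q 1
    simpa using this
  have hαord : orderOf α = q + 1 := by
    rw [hα, orderOf_pow' ω (by omega : q - 1 ≠ 0), hω, hq21, Nat.gcd_eq_right ⟨q + 1, mul_comm _ _⟩,
      Nat.mul_div_cancel _ (by omega : 0 < q - 1)]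
  have hα1 : α ^ (q + 1) = 1 := by rw [← hαord]; exact pow_orderOf_eq_one α
  have hαdvd : ∀ t : ℕ, α ^ t = 1 ↔ (q + 1) ∣ t := by
    intro t
    rw [← orderOf_dvd_iff_pow_eq_one, hαord]
  have hαne : α ≠ 0 := by
    intro h0
    rw [h0, zero_pow (by omega : q + 1 ≠ 0)] at hα1
    exact zero_ne_one hα1
  have hq1K : ((q + 1 : ℕ) : K) = 1 := by
    have hq0 : ((q : ℕ) : K) = 0 := by
      rw [hq2n]
      push_cast
      rw [htwo, zero_mul]
    push_cast
    rw [hq0, zero_add]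
  -- beta
  have hβq : β ^ q = 1 + β := by
    have h1 : β ^ q = 1 - β := by rw [← hβ]; ring
    rw [h1, sub_eq_add_neg, CharTwo.neg_eq]
  -- evaluation of h
  have heval : h.eval (α ^ s) =
      (∑ i ∈ Finset.Icc 1 n, ∑ j ∈ Finset.range (2 * r + 3),
        algebraMap F K (c j) * α ^ ((i + n) * (j + a) + s * (n + 1 - i)))
      + ∑ j ∈ Finset.range (2 * r + 3), algebraMap F K (c j) * β := by
    rw [hh]
    simp only [eval_add, eval_finset_sum, eval_mul, eval_C, eval_pow, eval_X]
    congr 1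
    refine Finset.sum_congr rfl fun i _ => Finset.sum_congr rfl fun j _ => ?_
    rw [← pow_mul, mul_assoc, ← pow_add]
  have hpow : (h.eval (α ^ s)) ^ q =
      (∑ i ∈ Finset.Icc 1 n, ∑ j ∈ Finset.range (2 * r + 3),
        algebraMap F K (c j) * (α ^ ((i + n) * (j + a) + s * (n + 1 - i))) ^ q)
      + ∑ j ∈ Finset.range (2 * r + 3), algebraMap F K (c j) * β ^ q := by
    rw [heval, hadd]
    congr 1
    · rw [hsum]
      refine Finset.sum_congr rfl fun i _ => ?_
      rw [hsum]
      refine Finset.sum_congr rfl fun j _ => ?_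
      rw [mul_pow, hfix]
    · rw [hsum]
      refine Finset.sum_congr rfl fun j _ => ?_
      rw [mul_pow, hfix]
  -- main rearrangement
  have hmain : h.eval (α ^ s) + (h.eval (α ^ s)) ^ q =
      ∑ j ∈ Finset.range (2 * r + 3), algebraMap F K (c j) *
        ((∑ i ∈ Finset.Icc 1 n,
          (α ^ ((i + n) * (j + a) + s * (n + 1 - i))
            + (α ^ ((i + n) * (j + a) + s * (n + 1 - i))) ^ q)) + 1) := by
    rw [hpow, heval]
    have hre : ∑ j ∈ Finset.range (2 * r + 3), algebraMap F K (c j) *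
        ((∑ i ∈ Finset.Icc 1 n,
          (α ^ ((i + n) * (j + a) + s * (n + 1 - i))
            + (α ^ ((i + n) * (j + a) + s * (n + 1 - i))) ^ q)) + 1)
        = (∑ j ∈ Finset.range (2 * r + 3), ∑ i ∈ Finset.Icc 1 n,
            algebraMap F K (c j) * α ^ ((i + n) * (j + a) + s * (n + 1 - i)))
          + ((∑ j ∈ Finset.range (2 * r + 3), ∑ i ∈ Finset.Icc 1 n,
            algebraMap F K (c j) * (α ^ ((i + n) * (j + a) + s * (n + 1 - i))) ^ q)
          + ∑ j ∈ Finset.range (2 * r + 3), algebraMap F K (c j)) := by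
      rw [← Finset.sum_add_distrib, ← Finset.sum_add_distrib]
      refine Finset.sum_congr rfl fun j _ => ?_
      rw [mul_add, mul_one, Finset.mul_sum]
      simp only [mul_add]
      rw [Finset.sum_add_distrib, add_assoc]
    rw [hre,
      show (∑ i ∈ Finset.Icc 1 n, ∑ j ∈ Finset.range (2 * r + 3),
          algebraMap F K (c j) * α ^ ((i + n) * (j + a) + s * (n + 1 - i)))
        = ∑ j ∈ Finset.range (2 * r + 3), ∑ i ∈ Finset.Icc 1 n,
          algebraMap F K (c j) * α ^ ((i + n) * (j + a) + s * (n + 1 - i)) from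
        Finset.sum_comm,
      show (∑ i ∈ Finset.Icc 1 n, ∑ j ∈ Finset.range (2 * r + 3),
          algebraMap F K (c j) * (α ^ ((i + n) * (j + a) + s * (n + 1 - i))) ^ q)
        = ∑ j ∈ Finset.range (2 * r + 3), ∑ i ∈ Finset.Icc 1 n,
          algebraMap F K (c j) * (α ^ ((i + n) * (j + a) + s * (n + 1 - i))) ^ q from
        Finset.sum_comm]
    have hβsum : (∑ j ∈ Finset.range (2 * r + 3), algebraMap F K (c j) * β)
        + ∑ j ∈ Finset.range (2 * r + 3), algebraMap F K (c j) * β ^ q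
        = ∑ j ∈ Finset.range (2 * r + 3), algebraMap F K (c j) := by
      rw [← Finset.sum_add_distrib]
      refine Finset.sum_congr rfl fun j _ => ?_
      rw [← mul_add, hβ, mul_one]
    linear_combination hβsum
  -- inner sum evaluation
  have hinner : ∀ j ∈ Finset.range (2 * r + 3),
      (∑ i ∈ Finset.Icc 1 n,
        (α ^ ((i + n) * (j + a) + s * (n + 1 - i))
          + (α ^ ((i + n) * (j + a) + s * (n + 1 - i))) ^ q)) + 1
      = if (q + 1) ∣ (n * (j + a + s) + s) then 1 else 0 := by
    intro j hj
    have hu1 : (α ^ (n * (j + a + s) + s)) ^ (q + 1) = 1 := by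
      rw [← pow_mul, mul_comm, pow_mul, hα1, one_pow]
    set u := α ^ (n * (j + a + s) + s) with hu
    have hterm : ∀ i ∈ Finset.Icc 1 n,
        α ^ ((i + n) * (j + a) + s * (n + 1 - i)) = u ^ (q * (2 * i - 1)) := by
      intro i hi
      simp only [Finset.mem_Icc] at hi
      have hexp : (i + n) * (j + a) + s * (n + 1 - i)
          + (n * (j + a + s) + s) * (2 * i - 1) = i * (j + a + s) * (q + 1) := by
        rw [hq2n]
        zify [hi.1, (by omega : i ≤ n + 1), (by omega : 1 ≤ 2 * i)]
        ring
      have h1 : α ^ ((i + n) * (j + a) + s * (n + 1 - i))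
          * α ^ ((n * (j + a + s) + s) * (2 * i - 1)) = 1 := by
        rw [← pow_add, hexp,
          show i * (j + a + s) * (q + 1) = (q + 1) * (i * (j + a + s)) from by ring,
          pow_mul, hα1, one_pow]
      have h2 : u ^ (q * (2 * i - 1))
          * α ^ ((n * (j + a + s) + s) * (2 * i - 1)) = 1 := by
        rw [hu, ← pow_mul, ← pow_add,
          show (n * (j + a + s) + s) * (q * (2 * i - 1))
              + (n * (j + a + s) + s) * (2 * i - 1)
            = (q + 1) * ((n * (j + a + s) + s) * (2 * i - 1)) from by ring,
          pow_mul, hα1, one_pow]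
      exact mul_right_cancel₀ (pow_ne_zero _ hαne) (h1.trans h2.symm)
    have htermq : ∀ i ∈ Finset.Icc 1 n,
        (u ^ (q * (2 * i - 1))) ^ q = u ^ (2 * i - 1) := by
      intro i hi
      simp only [Finset.mem_Icc] at hi
      rw [← pow_mul,
        show q * (2 * i - 1) * q = (2 * i - 1) + (q + 1) * ((q - 1) * (2 * i - 1)) from by
          zify [(by omega : 1 ≤ 2 * i), (by omega : 1 ≤ q)]
          ring,
        pow_add, pow_mul, hu1, one_pow, mul_one]
    have hterm2 : ∀ i ∈ Finset.Icc 1 n,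
        u ^ (q * (2 * i - 1)) = u ^ (q + 2 - 2 * i) := by
      intro i hi
      simp only [Finset.mem_Icc] at hi
      rw [show q * (2 * i - 1) = (q + 2 - 2 * i) + (q + 1) * (2 * (i - 1)) from by
          zify [(by omega : 1 ≤ 2 * i), (by omega : 2 * i ≤ q + 2), hi.1]
          ring,
        pow_add, pow_mul, hu1, one_pow, mul_one]
    have step1 : (∑ i ∈ Finset.Icc 1 n,
        (α ^ ((i + n) * (j + a) + s * (n + 1 - i))
          + (α ^ ((i + n) * (j + a) + s * (n + 1 - i))) ^ q)) + 1
        = (∑ i ∈ Finset.Icc 1 n, (u ^ (q + 2 - 2 * i) + u ^ (2 * i - 1))) + 1 := by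
      congr 1
      refine Finset.sum_congr rfl fun i hi => ?_
      rw [hterm i hi, htermq i hi, hterm2 i hi]
    have hbij : ∑ i ∈ Finset.Icc 1 n, u ^ (q + 2 - 2 * i)
        = ∑ i ∈ Finset.Icc 1 n, u ^ (2 * i) := by
      refine Finset.sum_nbij' (fun i => n + 1 - i) (fun i => n + 1 - i) ?_ ?_ ?_ ?_ ?_
      · intro i hi; simp only [Finset.mem_Icc] at hi ⊢; omega
      · intro i hi; simp only [Finset.mem_Icc] at hi ⊢; omega
      · intro i hi; simp only [Finset.mem_Icc] at hi; omega
      · intro i hi; simp only [Finset.mem_Icc] at hi; omega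
      · intro i hi
        simp only [Finset.mem_Icc] at hi
        congr 1
        omega
    have step2 : (∑ i ∈ Finset.Icc 1 n, (u ^ (q + 2 - 2 * i) + u ^ (2 * i - 1))) + 1
        = ∑ mm ∈ Finset.range (q + 1), u ^ mm := by
      rw [Finset.sum_add_distrib, hbij,
        show q + 1 = 2 * n + 1 from by omega, sum_pow_split u n,
        Finset.sum_add_distrib]
      ring
    rw [step1, step2]
    by_cases hcase : (q + 1) ∣ (n * (j + a + s) + s)
    · obtain ⟨t, ht⟩ := hcase
      have hu1' : u = 1 := by
        rw [hu, ht, pow_mul, hα1, one_pow]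
      rw [if_pos ⟨t, ht⟩, hu1']
      simp only [one_pow, Finset.sum_const, Finset.card_range, nsmul_eq_mul, mul_one]
      exact hq1K
    · have hune : u ≠ 1 := fun h1 => hcase ((hαdvd _).mp (hu ▸ h1))
      rw [if_neg hcase]
      exact geom_vanish u (q + 1) hu1 hune
  rw [hmain, Finset.sum_congr rfl (fun j hj => by rw [hinner j hj])]
  -- divisibility criterion
  have hdvd_iff : ∀ j ∈ Finset.range (2 * r + 3),
      ((q + 1) ∣ (n * (j + a + s) + s) ↔ j + a = s) := by
    intro j hj
    simp only [Finset.mem_range] at hj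
    have hb1 : j + a ≤ q := by omega
    constructor
    · rintro ⟨t, ht⟩
      have htz : (n : ℤ) * (j + a + s) + s = (q + 1) * t := by exact_mod_cast ht
      have hqz : (q : ℤ) = 2 * n := by exact_mod_cast hq2n
      have key : ((j : ℤ) + a) - s = (q + 1) * ((j + a + s) - 2 * t) := by
        linear_combination (-2 : ℤ) * htz - ((j : ℤ) + a + s) * hqz
      have h0 : ((j : ℤ) + a) - s = 0 := by
        refine Int.eq_zero_of_dvd_of_natAbs_lt_natAbs ⟨_, key⟩ ?_
        omega
      omega
    · intro hjs
      refine ⟨s, ?_⟩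
      rw [show j + a + s = 2 * s from by omega, hq2n]
      ring
  -- final computation
  by_cases hsa : a ≤ s
  · have hcond : ∀ j ∈ Finset.range (2 * r + 3),
        algebraMap F K (c j) * (if (q + 1) ∣ (n * (j + a + s) + s) then (1 : K) else 0)
          = if j = s - a then algebraMap F K (c j) else 0 := by
      intro j hj
      by_cases hcnd : j = s - a
      · rw [if_pos ((hdvd_iff j hj).mpr (by omega)), mul_one, if_pos hcnd]
      · rw [if_neg (fun hd => hcnd (by have := (hdvd_iff j hj).mp hd; omega)),
          mul_zero, if_neg hcnd]
    rw [Finset.sum_congr rfl hcond,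
      Finset.sum_ite_eq' (Finset.range (2 * r + 3)) (s - a)
        (fun j => algebraMap F K (c j))]
    have hcast : ((s : ℤ) - a) = ((s - a : ℕ) : ℤ) := by omega
    rw [hcast]
    by_cases hj0 : s - a < 2 * r + 3
    · rw [if_pos (Finset.mem_range.mpr hj0)]
    · rw [if_neg (fun hmem => hj0 (Finset.mem_range.mp hmem))]
      have hdeg : (∏ i ∈ Finset.Icc (n - r) (n + r + 1),
          (X - C (α ^ i)) : Polynomial K).natDegree = 2 * r + 2 := by
        rw [Polynomial.natDegree_prod_of_monic _ _ (fun i _ => monic_X_sub_C _)]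
        simp only [natDegree_X_sub_C, Finset.sum_const, Nat.card_Icc, smul_eq_mul, mul_one]
        omega
      rw [hc]
      rw [if_pos (by positivity : (0 : ℤ) ≤ ((s - a : ℕ) : ℤ))]
      rw [show (((s - a : ℕ) : ℤ)).toNat = s - a from by omega]
      exact (Polynomial.coeff_eq_zero_of_natDegree_lt (by omega : (∏ i ∈ Finset.Icc (n - r) (n + r + 1), (X - C (α ^ i)) : Polynomial K).natDegree < s - a)).symm
  · have hcond : ∀ j ∈ Finset.range (2 * r + 3),
        algebraMap F K (c j) * (if (q + 1) ∣ (n * (j + a + s) + s) then (1 : K) else 0)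
          = 0 := by
      intro j hj
      rw [if_neg (fun hd => by have := (hdvd_iff j hj).mp hd; omega), mul_zero]
    rw [Finset.sum_congr rfl hcond, Finset.sum_const_zero, hc,
      if_neg (by omega : ¬ (0 : ℤ) ≤ (s : ℤ) - a)]
end

section
/- Let q be an odd prime power and k even with 1 ≤ k ≤ q, and write k = q − 2r + 1. Let ω be a primitive element of F_{q²}, α = ω^{q−1}, and let c_0, …, c_{2r} ∈ F_q be defined by ∏_{i=−r+1}^{r} (X − ω α^i) = Σ_{j=0}^{2r} c_j X^j. For a ∈ {0, …, k−1} define h_a(X) = Σ_{i=1}^{(q+1)/2} Σ_{j=0}^{2r} ω^{j+a} c_j α^{i(j+a)} X^{(q+1)/2 − i}. Then deg h_a ≤ k/2 − 1; in particular the coefficients of X^m in h_a vanish for all m with k/2 − 1 < m ≤ (q+1)/2 − 1. -/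
open Polynomial

/-- Let `q` be an odd prime power and `k` even with `1 ≤ k ≤ q`, and write
`k = q − 2r + 1`.  Let `ω` be a primitive element of `K = 𝔽_{q²}`, `α = ω^{q−1}`, and let
`c₀, …, c_{2r} ∈ F = 𝔽_q` be defined by
`∏_{i=−r+1}^{r} (X − ω α^i) = Σ_{j=0}^{2r} c_j X^j`.
For `a ∈ {0, …, k−1}` define
`h_a(X) = Σ_{i=1}^{(q+1)/2} Σ_{j=0}^{2r} ω^{j+a} c_j α^{i(j+a)} X^{(q+1)/2 − i}`.
Then `deg h_a ≤ k/2 − 1`; in particular the coefficients of `X^m` in `h_a` vanish for all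
`m` with `k/2 − 1 < m ≤ (q+1)/2 − 1`. -/
theorem ha_degree_bound_even_odd
    (q k r : ℕ) (F K : Type*) [Field F] [Fintype F] [Field K] [Fintype K] [Algebra F K]
    (hF : Fintype.card F = q) (hK : Fintype.card K = q ^ 2)
    (hqodd : Odd q) (hkeven : Even k) (hk1 : 1 ≤ k) (hkq : k ≤ q)
    (hkr : (k : ℤ) = q - 2 * r + 1)
    (ω : K) (hω : orderOf ω = q ^ 2 - 1)
    (α : K) (hα : α = ω ^ (q - 1))
    (c : ℕ → F)
    (hc : ∀ j, algebraMap F K (c j) =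
      (∏ i ∈ Finset.Icc (-(r : ℤ) + 1) (r : ℤ), (X - C (ω * α ^ i))).coeff j)
    (a : ℕ) (ha : a < k)
    (h : Polynomial K)
    (hh : h = ∑ i ∈ Finset.Icc 1 ((q + 1) / 2), ∑ j ∈ Finset.range (2 * r + 1),
        C (ω ^ (j + a) * algebraMap F K (c j) * α ^ (i * (j + a))) * X ^ ((q + 1) / 2 - i)) :
    h.degree ≤ (k / 2 - 1 : ℕ) ∧
    ∀ m : ℕ, k / 2 - 1 < m → m ≤ (q + 1) / 2 - 1 → h.coeff m = 0 := by
  obtain ⟨t, ht⟩ := hkeven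
  have hq1 : q + 1 = k + 2 * r := by omega
  have hr1 : 1 ≤ r := by omega
  set N : ℕ := (q + 1) / 2 with hN
  have hNk : N = k / 2 + r := by omega
  -- the key vanishing lemma
  have key : ∀ i : ℕ, 1 ≤ i → i ≤ r →
      ∑ j ∈ Finset.range (2 * r + 1),
        ω ^ (j + a) * algebraMap F K (c j) * α ^ (i * (j + a)) = 0 := by
    intro i hi1 hir
    set P : Polynomial K := ∏ t ∈ Finset.Icc (-(r : ℤ) + 1) (r : ℤ), (X - C (ω * α ^ t))
      with hP
    have hcard : (Finset.Icc (-(r : ℤ) + 1) (r : ℤ)).card = 2 * r := by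
      rw [Int.card_Icc]; omega
    have hdeg : P.natDegree = 2 * r := by
      rw [hP, natDegree_prod _ _ (fun t _ => X_sub_C_ne_zero _)]
      simp only [natDegree_X_sub_C]
      rw [Finset.sum_const, hcard, smul_eq_mul, mul_one]
    have heval : P.eval (ω * α ^ i) = 0 := by
      rw [hP, eval_prod]
      refine Finset.prod_eq_zero (i := (i : ℤ)) ?_ ?_
      · rw [Finset.mem_Icc]; constructor <;> [omega; exact_mod_cast hir]
      · simp [zpow_natCast]
    have hsum : ∑ j ∈ Finset.range (2 * r + 1),
        algebraMap F K (c j) * (ω * α ^ i) ^ j = 0 := by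
      have := Polynomial.eval_eq_sum_range' (n := 2 * r + 1) (by omega : P.natDegree < 2 * r + 1)
        (ω * α ^ i)
      rw [heval] at this
      rw [show (fun j => algebraMap F K (c j) * (ω * α ^ i) ^ j)
            = fun j => P.coeff j * (ω * α ^ i) ^ j from funext fun j => by rw [hc j]]
      exact this.symm
    calc ∑ j ∈ Finset.range (2 * r + 1),
          ω ^ (j + a) * algebraMap F K (c j) * α ^ (i * (j + a))
        = ∑ j ∈ Finset.range (2 * r + 1),
          (ω * α ^ i) ^ a * (algebraMap F K (c j) * (ω * α ^ i) ^ j) := by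
          refine Finset.sum_congr rfl fun j _ => ?_
          have e1 : α ^ (i * (j + a)) = α ^ (i * j) * α ^ (i * a) := by
            rw [← pow_add, Nat.mul_add]
          have e2 : (α ^ i) ^ a = α ^ (i * a) := by rw [← pow_mul]
          have e3 : (α ^ i) ^ j = α ^ (i * j) := by rw [← pow_mul]
          rw [mul_pow, mul_pow, e2, e3, e1, pow_add]
          ring
      _ = (ω * α ^ i) ^ a * ∑ j ∈ Finset.range (2 * r + 1),
            algebraMap F K (c j) * (ω * α ^ i) ^ j := by rw [Finset.mul_sum]
      _ = 0 := by rw [hsum, mul_zero]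
  -- explicit coefficients of h
  have hco : ∀ m : ℕ, h.coeff m = ∑ i ∈ Finset.Icc 1 N,
      if m = N - i then
        (∑ j ∈ Finset.range (2 * r + 1),
          ω ^ (j + a) * algebraMap F K (c j) * α ^ (i * (j + a)))
      else 0 := by
    intro m
    rw [hh, finset_sum_coeff]
    refine Finset.sum_congr rfl fun i hi => ?_
    rw [finset_sum_coeff]
    by_cases hmi : m = N - i
    · rw [if_pos hmi, hmi]
      refine Finset.sum_congr rfl fun j _ => ?_
      rw [coeff_C_mul, coeff_X_pow, if_pos rfl, mul_one]
    · rw [if_neg hmi]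
      refine Finset.sum_eq_zero fun j _ => ?_
      rw [coeff_C_mul, coeff_X_pow, if_neg hmi, mul_zero]
  -- vanishing of high coefficients
  have hvanish : ∀ m : ℕ, k / 2 - 1 < m → h.coeff m = 0 := by
    intro m hm
    rw [hco]
    by_cases hmN : m < N
    · rw [Finset.sum_eq_single_of_mem (N - m)
        (by rw [Finset.mem_Icc]; omega)
        (fun i hi hne => by rw [Finset.mem_Icc] at hi; rw [if_neg (by omega)])]
      rw [if_pos (by omega)]
      exact key (N - m) (by omega) (by omega)
    · refine Finset.sum_eq_zero fun i hi => ?_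
      rw [Finset.mem_Icc] at hi
      rw [if_neg (by omega)]
  constructor
  · rw [degree_le_iff_coeff_zero]
    intro m hm
    exact hvanish m (by exact_mod_cast hm)
  · intro m hm _; exact hvanish m hm
end

section
/- Let q be an odd prime power and k even with 1 ≤ k ≤ q, and write k = q − 2r + 1. Let ω be a primitive element of F_{q²}, α = ω^{q−1}, and let c_0, …, c_{2r} ∈ F_q be defined by ∏_{i=−r+1}^{r} (X − ω α^i) = Σ_{j=0}^{2r} c_j X^j; set c_j = 0 for j < 0 or j > 2r. For a ∈ {0, …, k−1} define h_a(X) = Σ_{i=1}^{(q+1)/2} Σ_{j=0}^{2r} ω^{j+a} c_j α^{i(j+a)} X^{(q+1)/2 − i}. Then for every s ∈ {0, 1, …, q}, h_a(α^s) + α^{−s} h_a(α^s)^q = ω^s (−1)^s c_{s−a}, and consequently ω^{sq} h_a(α^s) + ω^s h_a(α^s)^q = ω^{s(q+1)} (−1)^s c_{s−a}. -/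
open Polynomial

set_option maxHeartbeats 2000000 in
/-- Let `q` be an odd prime power and `k` even with `1 ≤ k ≤ q`, and write
`k = q − 2r + 1`.  Let `ω` be a primitive element of `K = 𝔽_{q²}`, `α = ω^{q−1}`, and let
`c₀, …, c_{2r} ∈ F = 𝔽_q` be defined by
`∏_{i=−r+1}^{r} (X − ω α^i) = Σ_{j=0}^{2r} c_j X^j`;
set `c_j = 0` for `j < 0` or `j > 2r`.  For `a ∈ {0, …, k−1}` define
`h_a(X) = Σ_{i=1}^{(q+1)/2} Σ_{j=0}^{2r} ω^{j+a} c_j α^{i(j+a)} X^{(q+1)/2 − i}`.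
Then for every `s ∈ {0, 1, …, q}`,
`h_a(α^s) + α^{−s} h_a(α^s)^q = ω^s (−1)^s c_{s−a}`, and consequently
`ω^{sq} h_a(α^s) + ω^s h_a(α^s)^q = ω^{s(q+1)} (−1)^s c_{s−a}`. -/
theorem ha_evaluation_even_odd
    (q k r : ℕ) (F K : Type*) [Field F] [Fintype F] [Field K] [Fintype K] [Algebra F K]
    (hF : Fintype.card F = q) (hK : Fintype.card K = q ^ 2)
    (hqodd : Odd q) (hkeven : Even k) (hk1 : 1 ≤ k) (hkq : k ≤ q)
    (hkr : (k : ℤ) = q - 2 * r + 1)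
    (ω : K) (hω : orderOf ω = q ^ 2 - 1)
    (α : K) (hα : α = ω ^ (q - 1))
    (c : ℤ → F)
    (hc : ∀ j : ℤ, algebraMap F K (c j) =
      if 0 ≤ j then
        (∏ i ∈ Finset.Icc (-(r : ℤ) + 1) (r : ℤ), (X - C (ω * α ^ i))).coeff j.toNat
      else 0)
    (a : ℕ) (ha : a < k)
    (h : Polynomial K)
    (hh : h = ∑ i ∈ Finset.Icc 1 ((q + 1) / 2), ∑ j ∈ Finset.range (2 * r + 1),
        C (ω ^ (j + a) * algebraMap F K (c j) * α ^ (i * (j + a))) * X ^ ((q + 1) / 2 - i)) :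
    ∀ s : ℕ, s ≤ q →
      (h.eval (α ^ s) + α ^ (-(s : ℤ)) * (h.eval (α ^ s)) ^ q =
        ω ^ s * (-1 : K) ^ s * algebraMap F K (c ((s : ℤ) - (a : ℤ)))) ∧
      (ω ^ (s * q) * h.eval (α ^ s) + ω ^ s * (h.eval (α ^ s)) ^ q =
        ω ^ (s * (q + 1)) * (-1 : K) ^ s * algebraMap F K (c ((s : ℤ) - (a : ℤ)))) := by
  intro s hs
  -- numeric facts
  have hq2 : 2 ≤ q := by obtain ⟨m, rfl⟩ := hkeven; omega
  have har : (a : ℤ) + 2 * r ≤ q := by omega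
  set t := (q + 1) / 2 with ht
  have htq : q + 1 = 2 * t := by obtain ⟨m, hm⟩ := hqodd; omega
  have hq21 : 1 ≤ q ^ 2 - 1 := by
    have : 2 ^ 2 ≤ q ^ 2 := Nat.pow_le_pow_left hq2 2
    omega
  have hωpow : ω ^ (q ^ 2 - 1) = 1 := by rw [← hω]; exact pow_orderOf_eq_one ω
  have hω0 : ω ≠ 0 := by
    intro h0; rw [h0, zero_pow (by omega)] at hωpow; exact zero_ne_one hωpow
  have hα0 : α ≠ 0 := by rw [hα]; exact pow_ne_zero _ hω0
  have hsqfac : q ^ 2 - 1 = (q - 1) * (q + 1) := by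
    rcases q with _ | m
    · omega
    · simp only [Nat.add_sub_cancel]
      exact Nat.sub_eq_of_eq_add (by ring)
  have hαord : orderOf α = q + 1 := by
    rw [hα, orderOf_pow' ω (show q - 1 ≠ 0 by omega), hω, hsqfac,
      Nat.gcd_comm, Nat.gcd_eq_left ⟨q + 1, rfl⟩,
      Nat.mul_div_cancel_left _ (show 0 < q - 1 by omega)]
  have hα1 : α ^ (q + 1) = 1 := by rw [← hαord]; exact pow_orderOf_eq_one α
  have hαt : α ^ t = -1 := by
    have h2 : α ^ t * α ^ t = 1 := by rw [← pow_add, ← two_mul, ← htq, hα1]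
    rcases mul_self_eq_one_iff.1 h2 with h1 | h1
    · exfalso
      have hdvd : (q + 1) ∣ t := by rw [← hαord]; exact orderOf_dvd_of_pow_eq_one h1
      have := Nat.le_of_dvd (by omega) hdvd; omega
    · exact h1
  have hqK : (q : K) = 0 := by
    have h1 : (q : F) = 0 := by rw [← hF]; exact FiniteField.cast_card_eq_zero F
    calc (q : K) = algebraMap F K (q : F) := by rw [map_natCast]
      _ = 0 := by rw [h1, map_zero]
  -- divisibility criterion
  have hdvd : ∀ m : ℤ, (((q : ℤ) + 1) ∣ m ↔ α ^ m = 1) := by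
    intro m
    set αu : Kˣ := Units.mk0 α hα0 with hαu
    have h1 : orderOf αu = q + 1 := by rw [← hαord, ← orderOf_units]; rfl
    have h2 : ((αu ^ m : Kˣ) : K) = α ^ m := by
      rw [Units.val_zpow_eq_zpow_val]; rfl
    rw [show ((q : ℤ) + 1) = ((orderOf αu : ℕ) : ℤ) by rw [h1]; push_cast; ring,
      orderOf_dvd_iff_zpow_eq_one]
    constructor
    · intro hu; rw [← h2, hu, Units.val_one]
    · intro hx; ext; rw [h2, hx]; rfl
  -- geometric sum
  have hgeom : ∀ m : ℤ, ∑ i ∈ Finset.range (2 * t), (α ^ m) ^ i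
      = if ((q : ℤ) + 1) ∣ m then (1 : K) else 0 := by
    intro m
    by_cases hd : ((q : ℤ) + 1) ∣ m
    · rw [if_pos hd, (hdvd m).1 hd]
      simp [← htq, hqK]
    · rw [if_neg hd]
      have hx1 : α ^ m ≠ 1 := fun hx => hd ((hdvd m).2 hx)
      rw [geom_sum_eq hx1]
      have hone : (α ^ m) ^ (2 * t) = 1 := by
        rw [← zpow_natCast (α ^ m), ← zpow_mul, mul_comm, zpow_mul, ← htq,
          zpow_natCast, hα1, one_zpow]
      rw [hone, sub_self, zero_div]
  -- key sum identity
  have key : ∀ m : ℤ,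
      ((∑ i ∈ Finset.Icc 1 t, α ^ ((i : ℤ) * m)) +
        ∑ i ∈ Finset.Icc 1 t, α ^ ((1 - (i : ℤ)) * m))
      = if ((q : ℤ) + 1) ∣ m then (1 : K) else 0 := by
    intro m
    have hre : ∀ f : ℕ → K, ∑ i ∈ Finset.Icc 1 t, f i = ∑ i ∈ Finset.range t, f (1 + i) := by
      intro f
      rw [← Finset.Ico_add_one_right_eq_Icc, Finset.sum_Ico_eq_sum_range]
      simp
    rw [hre fun i => α ^ ((i : ℤ) * m), hre fun i => α ^ ((1 - (i : ℤ)) * m)]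
    have hsplit : α ^ ((1 - (t : ℤ)) * m) * ∑ i ∈ Finset.range (2 * t), (α ^ m) ^ i
        = (∑ i ∈ Finset.range t, α ^ ((1 - ((1 + i : ℕ) : ℤ)) * m)) +
          ∑ i ∈ Finset.range t, α ^ (((1 + i : ℕ) : ℤ) * m) := by
      rw [two_mul, Finset.sum_range_add, mul_add, Finset.mul_sum, Finset.mul_sum]
      congr 1
      · rw [← Finset.sum_range_reflect (fun i => α ^ ((1 - ((1 + i : ℕ) : ℤ)) * m)) t]
        apply Finset.sum_congr rfl
        intro i hi
        have hi' : i < t := Finset.mem_range.1 hi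
        rw [← zpow_natCast (α ^ m) i, ← zpow_mul, ← zpow_add₀ hα0]
        congr 1
        have hcast : (((t - 1 - i : ℕ)) : ℤ) = (t : ℤ) - 1 - i := by omega
        push_cast [hcast]
        ring
      · apply Finset.sum_congr rfl
        intro i hi
        rw [← zpow_natCast (α ^ m) (t + i), ← zpow_mul, ← zpow_add₀ hα0]
        congr 1
        push_cast
        ring
    by_cases hd : ((q : ℤ) + 1) ∣ m
    · have h1 : α ^ m = 1 := (hdvd m).1 hd
      have h2 : α ^ ((1 - (t : ℤ)) * m) = 1 := by rw [mul_comm, zpow_mul, h1, one_zpow]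
      rw [if_pos hd, add_comm, ← hsplit, h2, one_mul, hgeom m, if_pos hd]
    · rw [if_neg hd, add_comm, ← hsplit, hgeom m, if_neg hd, mul_zero]
  -- Frobenius
  obtain ⟨n, hp, hcard⟩ := FiniteField.card F (ringChar F)
  haveI hfp : Fact (ringChar F).Prime := ⟨hp⟩
  haveI : CharP K (ringChar F) :=
    charP_of_injective_algebraMap (algebraMap F K).injective (ringChar F)
  have hqpn : q = ringChar F ^ (n : ℕ) := by rw [← hF, hcard]
  have hfrobsum : ∀ {ι : Type} (A : Finset ι) (f : ι → K),
      (∑ x ∈ A, f x) ^ q = ∑ x ∈ A, f x ^ q := by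
    intro ι A f
    rw [hqpn]
    exact sum_pow_char_pow (ringChar F) (n : ℕ) A f
  -- auxiliary q-power facts
  have hωq : ω ^ q = ω * α := by
    have hq1 : q - 1 + 1 = q := by omega
    rw [hα, mul_comm, ← pow_succ, hq1]
  have hwpow : ∀ u : ℕ, (ω ^ u) ^ q = ω ^ u * α ^ ((u : ℕ) : ℤ) := by
    intro u
    rw [← pow_mul, mul_comm, pow_mul, hωq, mul_pow, zpow_natCast]
  have hcq : ∀ j : ℤ, (algebraMap F K (c j)) ^ q = algebraMap F K (c j) := by
    intro j
    rw [← map_pow]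
    congr 1
    rw [← hF]
    exact FiniteField.pow_card _
  have hαzq : ∀ z : ℤ, (α ^ z) ^ q = α ^ (-z) := by
    intro z
    rw [← zpow_natCast (α ^ z), ← zpow_mul]
    rw [show z * (q : ℤ) = -z + z * ((q : ℤ) + 1) by ring, zpow_add₀ hα0,
      show ((q : ℤ) + 1) = ((q + 1 : ℕ) : ℤ) by push_cast; ring]
    rw [mul_comm z, zpow_mul, zpow_natCast, hα1, one_zpow, mul_one]
  -- evaluate h at α^s
  have hE : h.eval (α ^ s) = (-1 : K) ^ s * ∑ i ∈ Finset.Icc 1 t,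
      ∑ j ∈ Finset.range (2 * r + 1),
        (ω ^ (j + a) * algebraMap F K (c j)) * α ^ ((i : ℤ) * (((j : ℤ) + a) - s)) := by
    rw [hh, eval_finset_sum, Finset.mul_sum]
    apply Finset.sum_congr rfl
    intro i hi
    obtain ⟨hi1, hi2⟩ := Finset.mem_Icc.1 hi
    rw [eval_finset_sum, Finset.mul_sum]
    apply Finset.sum_congr rfl
    intro j hj
    rw [eval_mul, eval_C, eval_pow, eval_X]
    have h1 : (α ^ s) ^ (t - i) = α ^ ((s : ℤ) * ((t : ℤ) - i)) := by
      rw [← pow_mul, ← zpow_natCast]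
      congr 1
      rw [Nat.cast_mul, Nat.cast_sub hi2]
    have h2 : α ^ (i * (j + a)) = α ^ ((i : ℤ) * ((j : ℤ) + a)) := by
      rw [← zpow_natCast]
      norm_cast
    have h3 : ((-1 : K)) ^ s = α ^ ((t : ℤ) * s) := by
      rw [← hαt, ← pow_mul, ← zpow_natCast]
      norm_cast
    rw [h1, h2, h3, mul_assoc (ω ^ (j + a) * algebraMap F K (c j)), ← zpow_add₀ hα0,
      show (i : ℤ) * ((j : ℤ) + a) + (s : ℤ) * ((t : ℤ) - i)
          = (t : ℤ) * s + (i : ℤ) * (((j : ℤ) + a) - s) by ring,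
      zpow_add₀ hα0]
    ring
  -- q-th power of the evaluation
  have hEq : (h.eval (α ^ s)) ^ q = (-1 : K) ^ s * ∑ i ∈ Finset.Icc 1 t,
      ∑ j ∈ Finset.range (2 * r + 1),
        (ω ^ (j + a) * algebraMap F K (c j)) *
          (α ^ ((j : ℤ) + a) * α ^ (-((i : ℤ) * (((j : ℤ) + a) - s)))) := by
    rw [hE, mul_pow, hfrobsum]
    congr 1
    · rw [← pow_mul, mul_comm s q, pow_mul, Odd.neg_one_pow hqodd]
    apply Finset.sum_congr rfl
    intro i hi
    rw [hfrobsum]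
    apply Finset.sum_congr rfl
    intro j hj
    rw [mul_pow, mul_pow, hwpow, hcq, hαzq]
    push_cast
    ring
  -- combine
  have hL : h.eval (α ^ s) + α ^ (-(s : ℤ)) * (h.eval (α ^ s)) ^ q
      = (-1 : K) ^ s * ∑ j ∈ Finset.range (2 * r + 1),
          (ω ^ (j + a) * algebraMap F K (c j)) *
            ((∑ i ∈ Finset.Icc 1 t, α ^ ((i : ℤ) * (((j : ℤ) + a) - s))) +
              ∑ i ∈ Finset.Icc 1 t, α ^ ((1 - (i : ℤ)) * (((j : ℤ) + a) - s))) := by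
    rw [hEq, hE]
    have hstep : α ^ (-(s : ℤ)) * ((-1 : K) ^ s * ∑ i ∈ Finset.Icc 1 t,
        ∑ j ∈ Finset.range (2 * r + 1),
          (ω ^ (j + a) * algebraMap F K (c j)) *
            (α ^ ((j : ℤ) + a) * α ^ (-((i : ℤ) * (((j : ℤ) + a) - s)))))
        = (-1 : K) ^ s * ∑ i ∈ Finset.Icc 1 t,
            ∑ j ∈ Finset.range (2 * r + 1),
              (ω ^ (j + a) * algebraMap F K (c j)) *
                α ^ ((1 - (i : ℤ)) * (((j : ℤ) + a) - s)) := by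
      rw [mul_left_comm, Finset.mul_sum]
      congr 1
      apply Finset.sum_congr rfl
      intro i hi
      rw [Finset.mul_sum]
      apply Finset.sum_congr rfl
      intro j hj
      have hz : α ^ ((1 - (i : ℤ)) * (((j : ℤ) + a) - s))
          = α ^ (-(s : ℤ)) * (α ^ ((j : ℤ) + a) * α ^ (-((i : ℤ) * (((j : ℤ) + a) - s)))) := by
        rw [← zpow_add₀ hα0, ← zpow_add₀ hα0]
        congr 1
        ring
      rw [hz]
      ring
    rw [hstep, ← mul_add, Finset.sum_comm, Finset.sum_comm
      (s := Finset.Icc 1 t) (t := Finset.range (2 * r + 1))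
      (f := fun i j => (ω ^ (j + a) * algebraMap F K (c j)) *
        α ^ ((1 - (i : ℤ)) * (((j : ℤ) + a) - s))), ← Finset.sum_add_distrib]
    congr 1
    apply Finset.sum_congr rfl
    intro j hj
    rw [← Finset.mul_sum, ← Finset.mul_sum, ← mul_add]
  -- the final sum
  have hfin : ∑ j ∈ Finset.range (2 * r + 1),
      (ω ^ (j + a) * algebraMap F K (c j)) *
        (if ((q : ℤ) + 1) ∣ (((j : ℤ) + a) - s) then (1 : K) else 0)
      = ω ^ s * algebraMap F K (c ((s : ℤ) - a)) := by
    have hiff : ∀ j ∈ Finset.range (2 * r + 1),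
        (((q : ℤ) + 1) ∣ (((j : ℤ) + a) - s) ↔ (j : ℤ) = (s : ℤ) - a) := by
      intro j hj
      have hj' : j ≤ 2 * r := Nat.lt_succ_iff.1 (Finset.mem_range.1 hj)
      constructor
      · rintro ⟨u, hu⟩
        have hb1 : -(q : ℤ) ≤ (j : ℤ) + a - s := by omega
        have hb2 : (j : ℤ) + a - s ≤ q := by omega
        rw [hu] at hb1 hb2
        have hu0 : u = 0 := by
          rcases lt_trichotomy u 0 with hlt | h0 | hgt
          · exfalso; nlinarith
          · exact h0
          · exfalso; nlinarith
        rw [hu0, mul_zero] at hu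
        omega
      · intro hj0
        rw [show (j : ℤ) + a - s = 0 by omega]
        exact dvd_zero _
    have hsum : ∑ j ∈ Finset.range (2 * r + 1),
        (ω ^ (j + a) * algebraMap F K (c j)) *
          (if ((q : ℤ) + 1) ∣ (((j : ℤ) + a) - s) then (1 : K) else 0)
        = ∑ j ∈ Finset.range (2 * r + 1),
          (if (j : ℤ) = (s : ℤ) - a then ω ^ (j + a) * algebraMap F K (c j) else 0) := by
      apply Finset.sum_congr rfl
      intro j hj
      rw [mul_ite, mul_one, mul_zero, if_congr (hiff j hj) rfl rfl]
    rw [hsum]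
    by_cases hcase : a ≤ s ∧ s ≤ a + 2 * r
    · obtain ⟨hc1, hc2⟩ := hcase
      rw [Finset.sum_eq_single_of_mem (s - a) (Finset.mem_range.2 (by omega))]
      · rw [if_pos (by omega)]
        rw [show (((s - a : ℕ)) : ℤ) = (s : ℤ) - a by omega,
          show s - a + a = s by omega]
      · intro b hb hne
        rw [if_neg]
        intro hbe
        exact hne (by omega)
    · have hc0 : algebraMap F K (c ((s : ℤ) - a)) = 0 := by
        rw [hc]
        by_cases hsa : (0 : ℤ) ≤ (s : ℤ) - a
        · rw [if_pos hsa]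
          apply Polynomial.coeff_eq_zero_of_natDegree_lt
          have hdeg : (∏ i ∈ Finset.Icc (-(r : ℤ) + 1) (r : ℤ),
              (X - C (ω * α ^ i))).natDegree = 2 * r := by
            rw [Polynomial.natDegree_prod_of_monic _ _
              (fun i _ => Polynomial.monic_X_sub_C _)]
            rw [Finset.sum_congr rfl (fun i _ => Polynomial.natDegree_X_sub_C (ω * α ^ i)),
              Finset.sum_const, Int.card_Icc, smul_eq_mul, mul_one]
            omega
          rw [hdeg]
          omega
        · rw [if_neg hsa]
      rw [hc0, mul_zero]
      apply Finset.sum_eq_zero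
      intro j hj
      have hj' : j ≤ 2 * r := Nat.lt_succ_iff.1 (Finset.mem_range.1 hj)
      rw [if_neg]
      intro hje
      omega
  have heq1 : h.eval (α ^ s) + α ^ (-(s : ℤ)) * (h.eval (α ^ s)) ^ q =
      ω ^ s * (-1 : K) ^ s * algebraMap F K (c ((s : ℤ) - (a : ℤ))) := by
    rw [hL]
    have : ∀ j : ℕ, ((∑ i ∈ Finset.Icc 1 t, α ^ ((i : ℤ) * (((j : ℤ) + a) - s))) +
        ∑ i ∈ Finset.Icc 1 t, α ^ ((1 - (i : ℤ)) * (((j : ℤ) + a) - s)))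
        = if ((q : ℤ) + 1) ∣ (((j : ℤ) + a) - s) then (1 : K) else 0 :=
      fun j => key (((j : ℤ) + a) - s)
    simp only [this]
    rw [hfin]
    ring
  refine ⟨heq1, ?_⟩
  have hws : ω ^ (s * q) * α ^ (-(s : ℤ)) = ω ^ s := by
    rw [hα, ← zpow_natCast ω (q - 1), ← zpow_mul, ← zpow_natCast ω (s * q),
      ← zpow_add₀ hω0,
      show ((s * q : ℕ) : ℤ) + ((q - 1 : ℕ) : ℤ) * (-(s : ℤ)) = ((s : ℕ) : ℤ) by
        push_cast [Nat.cast_sub (show 1 ≤ q by omega)]; ring,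
      zpow_natCast]
  calc ω ^ (s * q) * h.eval (α ^ s) + ω ^ s * (h.eval (α ^ s)) ^ q
      = ω ^ (s * q) * (h.eval (α ^ s) + α ^ (-(s : ℤ)) * (h.eval (α ^ s)) ^ q) := by
        rw [mul_add, ← mul_assoc, hws]
    _ = ω ^ (s * q) * (ω ^ s * (-1 : K) ^ s * algebraMap F K (c ((s : ℤ) - a))) := by
        rw [heq1]
    _ = ω ^ (s * (q + 1)) * (-1 : K) ^ s * algebraMap F K (c ((s : ℤ) - a)) := by
        rw [show s * (q + 1) = s * q + s by ring, pow_add]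
        ring
end
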